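/- arXiv:2502.16552 — 5 statements merged into one kernel-verified Lean document; each statement's English description precedes it below -/
import Mathlib

section
/- Define g(p) := (λ/p) ∫_{ℝ^d} [1 − exp(−μ p ∫_{ℝ^d} f(‖v‖) f(‖u−v‖) dv)] du for p ∈ (0,1]. Then g is monotonically non-increasing in p, and lim_{p→0⁺} g(p) = λμ (∫_{ℝ^d} f(‖x‖) dx)². -/
open MeasureTheory Filter

/-- Key concavity inequality: `p ↦ (1 - exp(-(p*t)))/p` is antitone in `p > 0`. -/
lemma aux_key_ineq (t p q : ℝ) (hp : 0 < p) (hpq : p ≤ q) :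
    (1 - Real.exp (-(q * t))) / q ≤ (1 - Real.exp (-(p * t))) / p := by
  have hq : 0 < q := hp.trans_le hpq
  set θ : ℝ := p / q with hθ
  have hθ0 : 0 ≤ θ := by positivity
  have hθ1 : θ ≤ 1 := div_le_one_of_le₀ hpq hq.le
  have hc := convexOn_exp.2 (Set.mem_univ (-(q * t))) (Set.mem_univ 0) hθ0
    (by linarith : (0:ℝ) ≤ 1 - θ) (by ring)
  simp only [smul_eq_mul, mul_zero, add_zero, Real.exp_zero, mul_one] at hc
  have e1 : θ * -(q * t) = -(p * t) := by
    have hqθ : q * θ = p := by rw [hθ]; field_simp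
    linear_combination (-t) * hqθ
  rw [e1] at hc
  rw [div_le_div_iff₀ hq hp]
  have h3 := mul_le_mul_of_nonneg_left hc hq.le
  have h4 : q * (θ * Real.exp (-(q * t)) + (1 - θ)) =
      p * Real.exp (-(q * t)) + (q - p) := by
    have hqθ : q * θ = p := by rw [hθ]; field_simp
    linear_combination (Real.exp (-(q * t)) - 1) * hqθ
  nlinarith [h3, h4]

/-- The difference quotient of `1 - exp(-(p*c))` at `0` tends to `c` from the right. -/
lemma aux_slope_tendsto (c : ℝ) :
    Tendsto (fun p : ℝ => (1 - Real.exp (-(p * c))) / p) (nhdsWithin 0 (Set.Ioi 0)) (nhds c) := by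
  have h1 : HasDerivAt (fun p : ℝ => -(p * c)) (-c) 0 := by
    have := ((hasDerivAt_id (0:ℝ)).const_mul (-c))
    simp only [mul_one] at this
    exact this.congr_of_eventuallyEq (Eventually.of_forall fun p => by simp [mul_comm])
  have h2 : HasDerivAt (fun p : ℝ => 1 - Real.exp (-(p * c))) c 0 := by
    have := (hasDerivAt_const (0:ℝ) (1:ℝ)).sub h1.exp
    exact this.congr_deriv (by simp)
  have h3 := hasDerivAt_iff_tendsto_slope.mp h2
  have h4 : Tendsto (slope (fun p : ℝ => 1 - Real.exp (-(p * c))) 0)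
      (nhdsWithin 0 (Set.Ioi 0)) (nhds c) :=
    h3.mono_left (nhdsWithin_mono _ (fun x hx => ne_of_gt hx))
  refine h4.congr' ?_
  filter_upwards [self_mem_nhdsWithin] with p hp
  simp [slope_def_field, div_eq_mul_inv, mul_comm]

/-- With `g(p) = (λ/p) ∫_{ℝ^d} [1 − exp(−μ p ∫_{ℝ^d} f(‖v‖)f(‖u−v‖) dv)] du`
for `p ∈ (0,1]`, the function `g` is monotonically non-increasing in `p`, and
`g(p) → λ μ (∫_{ℝ^d} f(‖x‖) dx)²` as `p → 0⁺`. -/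
theorem dispersed_mean_M_monotone_limit
    (d : ℕ) (hd : 0 < d) (lam mu : ℝ) (hlam : 0 < lam) (hmu : 0 < mu)
    (f : ℝ → ℝ) (hf : Measurable f) (hf01 : ∀ r, f r ∈ Set.Icc (0 : ℝ) 1)
    (hint : Integrable fun x : EuclideanSpace ℝ (Fin d) => f ‖x‖)
    (g : ℝ → ℝ)
    (hg : ∀ p, g p = (lam / p) * ∫ u : EuclideanSpace ℝ (Fin d),
        (1 - Real.exp (-(mu * p) *
          ∫ v : EuclideanSpace ℝ (Fin d), f ‖v‖ * f ‖u - v‖ ∂volume)) ∂volume) :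
    AntitoneOn g (Set.Ioc (0 : ℝ) 1) ∧
    Tendsto g (nhdsWithin 0 (Set.Ioi 0))
      (nhds (lam * mu * (∫ x : EuclideanSpace ℝ (Fin d), f ‖x‖ ∂volume) ^ 2)) := by
  set E := EuclideanSpace ℝ (Fin d)
  set F : E → ℝ := fun v => f ‖v‖ with hF
  set h : E → ℝ := fun u => ∫ v : E, f ‖v‖ * f ‖u - v‖ ∂volume with hhdef
  have hconv : h = convolution F F (ContinuousLinearMap.mul ℝ ℝ) volume := by
    ext u
    simp [hhdef, convolution_def, hF]
  have hhint : Integrable h := by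
    rw [hconv]
    exact hint.integrable_convolution (ContinuousLinearMap.mul ℝ ℝ) hint
  have hhval : (∫ u : E, h u ∂volume) = (∫ x : E, F x ∂volume) ^ 2 := by
    rw [hconv, integral_convolution _ hint hint]; simp [sq]; rfl
  have hh0 : ∀ u, 0 ≤ h u := fun u =>
    integral_nonneg fun v => mul_nonneg (hf01 _).1 (hf01 _).1
  -- integrability of the integrand for each nonnegative coefficient
  have hXint : ∀ c : ℝ, 0 ≤ c →
      Integrable (fun u : E => 1 - Real.exp (-c * h u)) := by
    intro c hc
    have hmeas : AEStronglyMeasurable (fun u : E => 1 - Real.exp (-c * h u)) volume := by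
      have hcont : Continuous fun t : ℝ => 1 - Real.exp (-c * t) := by fun_prop
      exact hcont.comp_aestronglyMeasurable hhint.aestronglyMeasurable
    refine (hhint.const_mul c).mono' hmeas (ae_of_all _ fun u => ?_)
    have hx : 0 ≤ c * h u := mul_nonneg hc (hh0 u)
    have hub : 1 - Real.exp (-c * h u) ≤ c * h u := by
      have := Real.add_one_le_exp (-(c * h u))
      rw [neg_mul]; linarith
    have hlb : 0 ≤ 1 - Real.exp (-c * h u) := by
      have : Real.exp (-c * h u) ≤ 1 := by
        rw [Real.exp_le_one_iff]; rw [neg_mul]; linarith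
      linarith
    rw [Real.norm_eq_abs, abs_of_nonneg hlb]
    exact hub
  -- rewrite g
  have hg' : ∀ p, g p = lam *
      ∫ u : E, (1 - Real.exp (-(mu * p) * h u)) / p ∂volume := by
    intro p
    rw [hg p, integral_div]
    simp only [hhdef]
    ring
  constructor
  · -- monotonicity
    intro p hp q hq hpq
    rw [hg' p, hg' q]
    refine mul_le_mul_of_nonneg_left ?_ hlam.le
    refine integral_mono ((hXint (mu * q) (mul_nonneg hmu.le hq.1.le)).div_const q)
      ((hXint (mu * p) (mul_nonneg hmu.le hp.1.le)).div_const p) fun u => ?_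
    have key := aux_key_ineq (mu * h u) p q hp.1 hpq
    simp only
    rw [show -(mu * q) * h u = -(q * (mu * h u)) by ring,
        show -(mu * p) * h u = -(p * (mu * h u)) by ring]
    exact key
  · -- limit
    have hDCT : Tendsto (fun p : ℝ => ∫ u : E, (1 - Real.exp (-(mu * p) * h u)) / p ∂volume)
        (nhdsWithin 0 (Set.Ioi 0)) (nhds (∫ u : E, mu * h u ∂volume)) := by
      refine tendsto_integral_filter_of_dominated_convergence (fun u => mu * h u)
        ?_ ?_ (hhint.const_mul mu) ?_
      · filter_upwards [self_mem_nhdsWithin] with p hp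
        have hcont : Continuous fun t : ℝ => (1 - Real.exp (-(mu * p) * t)) / p := by fun_prop
        exact hcont.comp_aestronglyMeasurable hhint.aestronglyMeasurable
      · filter_upwards [self_mem_nhdsWithin] with p hp
        refine ae_of_all _ fun u => ?_
        have hp0 : 0 < p := hp
        have hx : 0 ≤ mu * p * h u := by
          have := hh0 u; positivity
        have hub : 1 - Real.exp (-(mu * p) * h u) ≤ mu * p * h u := by
          have := Real.add_one_le_exp (-(mu * p * h u))
          rw [show -(mu * p) * h u = -(mu * p * h u) by ring]; linarith
        have hlb : 0 ≤ 1 - Real.exp (-(mu * p) * h u) := by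
          have : Real.exp (-(mu * p) * h u) ≤ 1 := by
            rw [Real.exp_le_one_iff, show -(mu * p) * h u = -(mu * p * h u) by ring]
            linarith
          linarith
        rw [Real.norm_eq_abs, abs_of_nonneg (by positivity)]
        rw [div_le_iff₀ hp0]
        calc 1 - Real.exp (-(mu * p) * h u) ≤ mu * p * h u := hub
          _ = mu * h u * p := by ring
      · refine ae_of_all _ fun u => ?_
        have := aux_slope_tendsto (mu * h u)
        refine this.congr fun p => ?_
        rw [show -(p * (mu * h u)) = -(mu * p) * h u by ring]
    have hfin : Tendsto g (nhdsWithin 0 (Set.Ioi 0))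
        (nhds (lam * ∫ u : E, mu * h u ∂volume)) := by
      refine (hDCT.const_mul lam).congr fun p => (hg' p).symm
    have hval : lam * ∫ u : E, mu * h u ∂volume
        = lam * mu * (∫ x : E, f ‖x‖ ∂volume) ^ 2 := by
      rw [integral_const_mul, hhval]
      ring
    rwa [hval] at hfin
end

section
/- For the connection function f₁(r) = 1_{r ≤ θ} in ℝ², the expected number of agents connected to the origin is E[M] = ∫₀^{2θ} 2πλ v (1 − exp(−μ(2θ² arccos(v/(2θ)) − v√(θ² − v²/4)))) dv. -/
open MeasureTheory Real intervalIntegral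

private lemma sqrt_seg_integral {θ a : ℝ} (hθ : 0 < θ) (ha : 0 ≤ a) (haθ : a ≤ θ) :
    ∫ t in a..θ, Real.sqrt (θ^2 - t^2)
      = (θ^2 * Real.arccos (a/θ) - a * Real.sqrt (θ^2 - a^2)) / 2 := by
  set F : ℝ → ℝ := fun t => (t * Real.sqrt (θ^2 - t^2) + θ^2 * Real.arcsin (t/θ)) / 2 with hF
  have hcont : ContinuousOn F (Set.Icc a θ) := by
    apply Continuous.continuousOn
    continuity
  have hderiv : ∀ t ∈ Set.Ioo a θ, HasDerivWithinAt F (Real.sqrt (θ^2 - t^2)) (Set.Ioi t) t := by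
    intro t ht
    have ht2 : 0 < θ^2 - t^2 := by nlinarith [ht.1, ht.2, ha]
    have hs : 0 < Real.sqrt (θ^2 - t^2) := Real.sqrt_pos.2 ht2
    have h1 : HasDerivAt (fun t : ℝ => θ^2 - t^2) (-(2*t)) t := by
      simpa using ((hasDerivAt_pow 2 t).const_sub (θ^2))
    have h2 : HasDerivAt (fun t : ℝ => Real.sqrt (θ^2 - t^2)) (-(2*t) / (2 * Real.sqrt (θ^2 - t^2))) t :=
      h1.sqrt ht2.ne'
    have h3 : HasDerivAt (fun t : ℝ => t * Real.sqrt (θ^2 - t^2))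
        (Real.sqrt (θ^2 - t^2) + t * (-(2*t) / (2 * Real.sqrt (θ^2 - t^2)))) t := by
      simpa [mul_comm] using (hasDerivAt_id' t).fun_mul h2
    have hne1 : t/θ ≠ -1 := by
      have : 0 ≤ t/θ := div_nonneg (le_trans ha ht.1.le) hθ.le
      intro h; rw [h] at this; linarith
    have hne2 : t/θ ≠ 1 := by
      intro h
      have := (div_eq_one_iff_eq hθ.ne').1 h
      exact absurd this (by linarith [ht.2])
    have h4 : HasDerivAt (fun t : ℝ => Real.arcsin (t/θ)) (1 / Real.sqrt (1 - (t/θ)^2) * (1/θ)) t := by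
      have := (Real.hasDerivAt_arcsin hne1 hne2).comp t
        ((hasDerivAt_id t).div_const θ)
      simpa [Function.comp_def] using this
    have hsq : Real.sqrt (1 - (t/θ)^2) = Real.sqrt (θ^2 - t^2) / θ := by
      have : 1 - (t/θ)^2 = (θ^2 - t^2) / θ^2 := by field_simp
      rw [this, Real.sqrt_div ht2.le, Real.sqrt_sq hθ.le]
    have h5 : HasDerivAt F ((Real.sqrt (θ^2 - t^2) + t * (-(2*t) / (2 * Real.sqrt (θ^2 - t^2)))
        + θ^2 * (1 / Real.sqrt (1 - (t/θ)^2) * (1/θ))) / 2) t :=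
      ((h3.add (h4.const_mul (θ^2)))).div_const 2
    have hss : Real.sqrt (θ^2 - t^2) * Real.sqrt (θ^2 - t^2) = θ^2 - t^2 :=
      Real.mul_self_sqrt ht2.le
    have heq : (Real.sqrt (θ^2 - t^2) + t * (-(2*t) / (2 * Real.sqrt (θ^2 - t^2)))
        + θ^2 * (1 / Real.sqrt (1 - (t/θ)^2) * (1/θ))) / 2 = Real.sqrt (θ^2 - t^2) := by
      rw [hsq]
      field_simp
      linear_combination (-1 : ℝ) * hss
    rw [heq] at h5
    exact h5.hasDerivWithinAt
  have hint : IntervalIntegrable (fun t => Real.sqrt (θ^2 - t^2)) volume a θ := by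
    apply Continuous.intervalIntegrable; fun_prop
  have := intervalIntegral.integral_eq_sub_of_hasDeriv_right_of_le haθ hcont hderiv
    (hint.mono_set (by rw [Set.uIcc_of_le haθ]))
  rw [this]
  have h1 : Real.sqrt (θ^2 - θ^2) = 0 := by simp
  have h2 : Real.arcsin (θ/θ) = π/2 := by rw [div_self hθ.ne', Real.arcsin_one]
  rw [hF]
  simp only [h1, h2]
  rw [Real.arccos]
  ring

private lemma lens_area {θ v : ℝ} (hθ : 0 < θ) (hv : 0 ≤ v) (hv2 : v ≤ 2*θ) :
    volume {p : ℝ × ℝ | (p.1 - v)^2 + p.2^2 ≤ θ^2 ∧ p.1^2 + p.2^2 ≤ θ^2}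
      = ENNReal.ofReal (2 * θ^2 * Real.arccos (v/(2*θ)) - v * Real.sqrt (θ^2 - v^2/4))
    ∧ 0 ≤ 2 * θ^2 * Real.arccos (v/(2*θ)) - v * Real.sqrt (θ^2 - v^2/4) := by
  set S : Set (ℝ × ℝ) := {p | (p.1 - v)^2 + p.2^2 ≤ θ^2 ∧ p.1^2 + p.2^2 ≤ θ^2} with hS
  set g : ℝ → ℝ := fun x => 2 * Real.sqrt (min (θ^2 - (x-v)^2) (θ^2 - x^2)) with hg
  have hgc : Continuous g := by fun_prop
  have hSm : MeasurableSet S := by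
    have hS2 : S = {p : ℝ × ℝ | (p.1 - v)^2 + p.2^2 ≤ θ^2} ∩ {p : ℝ × ℝ | p.1^2 + p.2^2 ≤ θ^2} :=
      rfl
    rw [hS2]
    exact ((isClosed_le (f := fun p : ℝ × ℝ => (p.1 - v)^2 + p.2^2) (by fun_prop)
        continuous_const).inter
      (isClosed_le (f := fun p : ℝ × ℝ => p.1^2 + p.2^2) (by fun_prop)
        continuous_const)).measurableSet
  have hfiber : ∀ x : ℝ, volume (Prod.mk x ⁻¹' S) = ENNReal.ofReal (g x) := by
    intro x
    have : Prod.mk x ⁻¹' S = {y : ℝ | y^2 ≤ min (θ^2 - (x-v)^2) (θ^2 - x^2)} := by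
      ext y
      simp only [S, Set.mem_preimage, Set.mem_setOf_eq, le_min_iff]
      constructor <;> intro h <;> constructor <;> linarith [h.1, h.2]
    rw [this]
    set m := min (θ^2 - (x-v)^2) (θ^2 - x^2) with hm
    rcases le_or_gt 0 m with hm0 | hm0
    · have : {y : ℝ | y^2 ≤ m} = Set.Icc (-Real.sqrt m) (Real.sqrt m) := by
        ext y
        simp only [Set.mem_setOf_eq, Set.mem_Icc]
        constructor
        · intro h
          have h1 : |y| ≤ Real.sqrt m := by
            rw [← Real.sqrt_sq_eq_abs]
            exact Real.sqrt_le_sqrt h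
          exact abs_le.1 h1
        · intro ⟨h1, h2⟩
          nlinarith [Real.sq_sqrt hm0, abs_le.2 ⟨h1, h2⟩, sq_abs y]
      rw [this, Real.volume_Icc, hg]
      congr 1
      ring
    · have : {y : ℝ | y^2 ≤ m} = ∅ := by
        ext y; simp only [Set.mem_setOf_eq, Set.mem_empty_iff_false, iff_false]
        nlinarith [sq_nonneg y]
      rw [this, measure_empty]
      show (0 : ENNReal) = ENNReal.ofReal (2 * Real.sqrt m)
      rw [Real.sqrt_eq_zero_of_nonpos hm0.le, mul_zero, ENNReal.ofReal_zero]
  have hvol : volume S = ∫⁻ x : ℝ, ENNReal.ofReal (g x) := by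
    rw [MeasureTheory.Measure.volume_eq_prod, Measure.prod_apply hSm]
    exact lintegral_congr hfiber
  have hsupp : ∀ x : ℝ, x ∉ Set.Ioc (v - θ) θ → g x = 0 := by
    intro x hx
    rw [Set.mem_Ioc, not_and_or] at hx
    rw [hg]
    simp only
    rcases hx with hx | hx
    · push_neg at hx
      have : θ^2 - (x-v)^2 ≤ 0 := by nlinarith
      rw [Real.sqrt_eq_zero_of_nonpos (le_trans (min_le_left _ _) this), mul_zero]
    · push_neg at hx
      have : θ^2 - x^2 ≤ 0 := by nlinarith
      rw [Real.sqrt_eq_zero_of_nonpos (le_trans (min_le_right _ _) this), mul_zero]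
  have hginteg : Integrable g := by
    apply hgc.integrable_of_hasCompactSupport
    apply HasCompactSupport.intro (isCompact_Icc (a := v - θ) (b := θ))
    intro x hx
    apply hsupp
    intro hx'
    exact hx (Set.Ioc_subset_Icc_self hx')
  have hgnn : ∀ x, 0 ≤ g x := fun x => by positivity
  have h1 : volume S = ENNReal.ofReal (∫ x : ℝ, g x) := by
    rw [hvol, MeasureTheory.ofReal_integral_eq_lintegral_ofReal hginteg
      (Filter.Eventually.of_forall hgnn)]
  have h2 : ∫ x : ℝ, g x = ∫ x in (v - θ)..θ, g x := by
    rw [intervalIntegral.integral_of_le (by linarith),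
      MeasureTheory.setIntegral_eq_integral_of_forall_compl_eq_zero hsupp]
  have h3 : ∫ x in (v - θ)..θ, g x = (∫ x in (v - θ)..(v/2), g x) + ∫ x in (v/2)..θ, g x :=
    (intervalIntegral.integral_add_adjacent_intervals
      (hgc.intervalIntegrable _ _) (hgc.intervalIntegrable _ _)).symm
  have hseg : ∫ t in (v/2)..θ, Real.sqrt (θ^2 - t^2)
      = (θ^2 * Real.arccos ((v/2)/θ) - (v/2) * Real.sqrt (θ^2 - (v/2)^2)) / 2 :=
    sqrt_seg_integral hθ (by linarith) (by linarith)
  have h4 : ∫ x in (v/2)..θ, g x = 2 * ∫ t in (v/2)..θ, Real.sqrt (θ^2 - t^2) := by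
    rw [← intervalIntegral.integral_const_mul]
    apply intervalIntegral.integral_congr
    intro x hx
    rw [Set.uIcc_of_le (by linarith)] at hx
    rw [hg]
    simp only
    congr 2
    rw [min_eq_right]
    nlinarith [hx.1, hx.2]
  have h5 : ∫ x in (v - θ)..(v/2), g x = 2 * ∫ t in (v/2)..θ, Real.sqrt (θ^2 - t^2) := by
    have he : ∀ x ∈ Set.uIcc (v - θ) (v/2), g x = 2 * Real.sqrt (θ^2 - (v - x)^2) := by
      intro x hx
      rw [Set.uIcc_of_le (by linarith)] at hx
      rw [hg]
      simp only
      congr 2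
      rw [show (x - v)^2 = (v - x)^2 by ring, min_eq_left]
      nlinarith [hx.1, hx.2]
    rw [intervalIntegral.integral_congr he,
      intervalIntegral.integral_comp_sub_left (fun s => 2 * Real.sqrt (θ^2 - s^2)) v]
    rw [show v - v/2 = v/2 by ring, show v - (v - θ) = θ by ring,
      intervalIntegral.integral_const_mul]
  have key : ∫ x : ℝ, g x
      = 2 * θ^2 * Real.arccos (v/(2*θ)) - v * Real.sqrt (θ^2 - v^2/4) := by
    rw [h2, h3, h4, h5, hseg]
    have e1 : (v/2)/θ = v/(2*θ) := by ring
    have e2 : θ^2 - (v/2)^2 = θ^2 - v^2/4 := by ring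
    rw [e1, e2]
    ring
  constructor
  · rw [h1, key]
  · rw [← key]
    exact integral_nonneg hgnn

private lemma ball_inter_transfer {θ v : ℝ} (hθ : 0 < θ) :
    volume (Metric.closedBall (EuclideanSpace.single (0 : Fin 2) v) θ ∩
        Metric.closedBall (0 : EuclideanSpace ℝ (Fin 2)) θ)
      = volume {p : ℝ × ℝ | (p.1 - v)^2 + p.2^2 ≤ θ^2 ∧ p.1^2 + p.2^2 ≤ θ^2} := by
  set S : Set (ℝ × ℝ) := {p | (p.1 - v)^2 + p.2^2 ≤ θ^2 ∧ p.1^2 + p.2^2 ≤ θ^2} with hS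
  have hSm : MeasurableSet S := by
    have hS2 : S = {p : ℝ × ℝ | (p.1 - v)^2 + p.2^2 ≤ θ^2} ∩ {p : ℝ × ℝ | p.1^2 + p.2^2 ≤ θ^2} :=
      rfl
    rw [hS2]
    exact ((isClosed_le (f := fun p : ℝ × ℝ => (p.1 - v)^2 + p.2^2) (by fun_prop)
        continuous_const).inter
      (isClosed_le (f := fun p : ℝ × ℝ => p.1^2 + p.2^2) (by fun_prop)
        continuous_const)).measurableSet
  have hmp : MeasurePreserving
      (fun x : EuclideanSpace ℝ (Fin 2) =>
        MeasurableEquiv.finTwoArrow ((MeasurableEquiv.toLp 2 (Fin 2 → ℝ)).symm x)) :=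
    (volume_preserving_finTwoArrow ℝ).comp (EuclideanSpace.volume_preserving_symm_measurableEquiv_toLp _)
  have hpre : Metric.closedBall (EuclideanSpace.single (0 : Fin 2) v) θ ∩
        Metric.closedBall (0 : EuclideanSpace ℝ (Fin 2)) θ
      = (fun x : EuclideanSpace ℝ (Fin 2) =>
          MeasurableEquiv.finTwoArrow ((MeasurableEquiv.toLp 2 (Fin 2 → ℝ)).symm x)) ⁻¹' S := by
    ext x
    have happ : MeasurableEquiv.finTwoArrow ((MeasurableEquiv.toLp 2 (Fin 2 → ℝ)).symm x)
        = (x 0, x 1) := rfl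
    simp only [Set.mem_preimage, happ, Set.mem_inter_iff, Metric.mem_closedBall, hS,
      Set.mem_setOf_eq]
    rw [EuclideanSpace.dist_eq, EuclideanSpace.dist_eq]
    rw [Real.sqrt_le_left hθ.le, Real.sqrt_le_left hθ.le]
    simp only [Fin.sum_univ_two, Real.dist_eq, EuclideanSpace.single_apply,
      PiLp.zero_apply, if_pos rfl]
    norm_num
  rw [hpre, hmp.measure_preimage hSm.nullMeasurableSet]

private lemma single_norm_smul : ∀ (c : ℝ), c • EuclideanSpace.single (0 : Fin 2) (1:ℝ)
    = EuclideanSpace.single (0 : Fin 2) c := by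
  intro c
  ext j
  simp [EuclideanSpace.single_apply]

private lemma rot_inv (θ : ℝ) (x : EuclideanSpace ℝ (Fin 2)) :
    volume (Metric.closedBall x θ ∩ Metric.closedBall (0 : EuclideanSpace ℝ (Fin 2)) θ)
      = volume (Metric.closedBall (EuclideanSpace.single (0 : Fin 2) ‖x‖) θ ∩
          Metric.closedBall (0 : EuclideanSpace ℝ (Fin 2)) θ) := by
  rcases eq_or_ne x 0 with rfl | hx
  · have : EuclideanSpace.single (0 : Fin 2) ‖(0 : EuclideanSpace ℝ (Fin 2))‖
        = (0 : EuclideanSpace ℝ (Fin 2)) := by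
      ext j; simp [EuclideanSpace.single_apply]
    rw [this]
  · set w : Fin 2 → EuclideanSpace ℝ (Fin 2) := fun _ => ‖x‖⁻¹ • x with hw
    have hworth : Orthonormal ℝ (({0} : Set (Fin 2)).restrict w) := by
      constructor
      · intro i
        exact norm_smul_inv_norm hx
      · intro i j hij
        exact absurd (Subtype.ext (by
          have hi := i.2; have hj := j.2
          simp only [Set.mem_singleton_iff] at hi hj
          rw [hi, hj])) hij
    obtain ⟨b, hb⟩ := hworth.exists_orthonormalBasis_extension_of_card_eq
      (by simp [finrank_euclideanSpace_fin])
    have hb0 : b 0 = ‖x‖⁻¹ • x := hb 0 rfl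
    set f := b.repr with hf
    have hxe : x = ‖x‖ • b 0 := by
      rw [hb0, smul_smul, mul_inv_cancel₀ (norm_ne_zero_iff.2 hx), one_smul]
    have hfx : f x = EuclideanSpace.single (0 : Fin 2) ‖x‖ := by
      have h1 : f x = ‖x‖ • f (b 0) := by
        nth_rewrite 1 [hxe]
        exact _root_.map_smul f _ _
      rw [h1, OrthonormalBasis.repr_self, single_norm_smul]
    have hset : Metric.closedBall x θ ∩ Metric.closedBall (0 : EuclideanSpace ℝ (Fin 2)) θ
        = f ⁻¹' (Metric.closedBall (EuclideanSpace.single (0 : Fin 2) ‖x‖) θ ∩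
            Metric.closedBall (0 : EuclideanSpace ℝ (Fin 2)) θ) := by
      ext p
      simp only [Set.mem_preimage, Set.mem_inter_iff, Metric.mem_closedBall]
      have e1 : dist (f p) (EuclideanSpace.single (0 : Fin 2) ‖x‖) = dist p x := by
        rw [← hfx, f.dist_map]
      have e2 : dist (f p) (0 : EuclideanSpace ℝ (Fin 2)) = dist p 0 := by
        rw [dist_zero_right, f.norm_map, ← dist_zero_right]
      rw [e1, e2]
    rw [hset, f.measurePreserving.measure_preimage
      ((measurableSet_closedBall.inter measurableSet_closedBall).nullMeasurableSet)]

private lemma inter_empty_of_far {θ : ℝ} {x : EuclideanSpace ℝ (Fin 2)} (h : 2*θ < ‖x‖) :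
    Metric.closedBall x θ ∩ Metric.closedBall (0 : EuclideanSpace ℝ (Fin 2)) θ = ∅ := by
  ext p
  simp only [Set.mem_inter_iff, Metric.mem_closedBall, Set.mem_empty_iff_false, iff_false,
    not_and_or, not_le]
  by_contra hc
  push_neg at hc
  have h1 := hc.1
  have h2 := hc.2
  have : dist x (0 : EuclideanSpace ℝ (Fin 2)) ≤ dist x p + dist p 0 := dist_triangle _ _ _
  rw [dist_zero_right] at this
  rw [dist_comm] at h1
  linarith

/-- For the Boolean connection function `f₁(r) = 1_{r ≤ θ}` in `ℝ²`, the expected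
number of agents connected to the origin,
`E M = λ ∫_{ℝ²} (1 − e^{−μ·area(B(x,θ) ∩ B(0,θ))}) dx`, equals
`∫₀^{2θ} 2πλ v (1 − exp(−μ(2θ² arccos(v/(2θ)) − v √(θ² − v²/4)))) dv`. -/
theorem mean_M_disk
    (lam mu θ : ℝ) (hlam : 0 < lam) (hmu : 0 < mu) (hθ : 0 < θ)
    (EM : ℝ)
    (hEM : EM = lam * ∫ x : EuclideanSpace ℝ (Fin 2),
        (1 - Real.exp (-mu *
          (volume (Metric.closedBall x θ ∩
            Metric.closedBall (0 : EuclideanSpace ℝ (Fin 2)) θ)).toReal)) ∂volume) :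
    EM = ∫ v in Set.Ioc (0 : ℝ) (2 * θ),
        2 * π * lam * v *
          (1 - Real.exp (-mu *
            (2 * θ ^ 2 * Real.arccos (v / (2 * θ)) - v * Real.sqrt (θ ^ 2 - v ^ 2 / 4)))) := by
  set f : ℝ → ℝ := fun r => 1 - Real.exp (-mu *
    (volume (Metric.closedBall (EuclideanSpace.single (0 : Fin 2) r) θ ∩
      Metric.closedBall (0 : EuclideanSpace ℝ (Fin 2)) θ)).toReal) with hfdef
  have step1 : (∫ x : EuclideanSpace ℝ (Fin 2),
      (1 - Real.exp (-mu * (volume (Metric.closedBall x θ ∩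
        Metric.closedBall (0 : EuclideanSpace ℝ (Fin 2)) θ)).toReal)) ∂volume)
      = ∫ x : EuclideanSpace ℝ (Fin 2), f ‖x‖ ∂volume := by
    apply MeasureTheory.integral_congr_ae
    apply Filter.Eventually.of_forall
    intro x
    rw [hfdef]
    simp only
    rw [rot_inv]
  have step2 : (∫ x : EuclideanSpace ℝ (Fin 2), f ‖x‖ ∂volume)
      = (2 : ℕ) • (volume (Metric.ball (0 : EuclideanSpace ℝ (Fin 2)) 1)).toReal •
          ∫ y in Set.Ioi (0:ℝ), y ^ (2 - 1 : ℕ) • f y := by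
    have := MeasureTheory.integral_fun_norm_addHaar
      (volume : Measure (EuclideanSpace ℝ (Fin 2))) f
    simpa [finrank_euclideanSpace_fin, measureReal_def] using this
  have hballvol : (volume (Metric.ball (0 : EuclideanSpace ℝ (Fin 2)) 1)).toReal = π := by
    rw [EuclideanSpace.volume_ball]
    simp only [Fintype.card_fin]
    rw [ENNReal.ofReal_one, one_pow, one_mul]
    rw [show ((2:ℕ):ℝ)/2 + 1 = 2 by norm_num]
    rw [Real.Gamma_two]
    rw [show Real.sqrt π ^ 2 / 1 = Real.sqrt π ^ 2 by ring]
    rw [Real.sq_sqrt pi_nonneg]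
    exact ENNReal.toReal_ofReal pi_nonneg
  have hA : ∀ v ∈ Set.Ioc (0:ℝ) (2*θ),
      (volume (Metric.closedBall (EuclideanSpace.single (0 : Fin 2) v) θ ∩
        Metric.closedBall (0 : EuclideanSpace ℝ (Fin 2)) θ)).toReal
      = 2 * θ ^ 2 * Real.arccos (v / (2 * θ)) - v * Real.sqrt (θ ^ 2 - v ^ 2 / 4) := by
    intro v hv
    obtain ⟨hla, hnn⟩ := lens_area hθ hv.1.le hv.2
    rw [ball_inter_transfer hθ, hla, ENNReal.toReal_ofReal hnn]
  have hf0 : ∀ y : ℝ, 2*θ < y → f y = 0 := by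
    intro y hy
    rw [hfdef]
    simp only
    rw [inter_empty_of_far (by
      rw [EuclideanSpace.norm_single]
      rw [Real.norm_eq_abs, abs_of_nonneg (by linarith)]
      exact hy)]
    simp
  have step3 : (∫ y in Set.Ioi (0:ℝ), y ^ (2 - 1 : ℕ) • f y)
      = ∫ y in Set.Ioc (0:ℝ) (2*θ), y * f y := by
    have hind : ∀ y ∈ Set.Ioi (0:ℝ),
        y ^ (2 - 1 : ℕ) • f y = (Set.Ioc (0:ℝ) (2*θ)).indicator (fun y => y * f y) y := by
      intro y hy
      by_cases h : y ∈ Set.Ioc (0:ℝ) (2*θ)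
      · rw [Set.indicator_of_mem h]
        simp [smul_eq_mul]
      · rw [Set.indicator_of_notMem h]
        have : 2*θ < y := by
          rw [Set.mem_Ioc, not_and_or] at h
          rcases h with h | h
          · exact absurd hy h
          · push_neg at h; exact h
        rw [hf0 y this]
        simp
    rw [MeasureTheory.setIntegral_congr_fun measurableSet_Ioi hind,
      MeasureTheory.setIntegral_indicator measurableSet_Ioc,
      Set.inter_eq_self_of_subset_right Set.Ioc_subset_Ioi_self]
  have step4 : (∫ y in Set.Ioc (0:ℝ) (2*θ), y * f y)
      = ∫ y in Set.Ioc (0:ℝ) (2*θ), y * (1 - Real.exp (-mu *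
          (2 * θ ^ 2 * Real.arccos (y / (2 * θ)) - y * Real.sqrt (θ ^ 2 - y ^ 2 / 4)))) := by
    apply MeasureTheory.setIntegral_congr_fun measurableSet_Ioc
    intro y hy
    rw [hfdef]
    simp only
    rw [hA y hy]
  have final : ∫ v in Set.Ioc (0 : ℝ) (2 * θ),
        2 * π * lam * v *
          (1 - Real.exp (-mu *
            (2 * θ ^ 2 * Real.arccos (v / (2 * θ)) - v * Real.sqrt (θ ^ 2 - v ^ 2 / 4))))
      = (2 * π * lam) * ∫ y in Set.Ioc (0:ℝ) (2*θ), y * (1 - Real.exp (-mu *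
          (2 * θ ^ 2 * Real.arccos (y / (2 * θ)) - y * Real.sqrt (θ ^ 2 - y ^ 2 / 4)))) := by
    rw [← MeasureTheory.integral_const_mul]
    apply MeasureTheory.setIntegral_congr_fun measurableSet_Ioc
    intro y _
    ring
  rw [hEM, step1, step2, hballvol, step3, step4, final]
  rw [nsmul_eq_mul, smul_eq_mul]
  ring
end

section
/- The area of the intersection of two disks of equal radius θ in ℝ² whose centers are at distance v, with 0 ≤ v ≤ 2θ, equals 2θ² arccos(v/(2θ)) − v√(θ² − v²/4). -/
open MeasureTheory Real intervalIntegral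

lemma key_integral (θ c : ℝ) (hθ : 0 < θ) (hc0 : 0 ≤ c) (hcθ : c ≤ θ) :
    ∫ a in c..θ, Real.sqrt (θ^2 - a^2)
      = (θ^2 * arccos (c/θ) - c * Real.sqrt (θ^2 - c^2)) / 2 := by
  set F : ℝ → ℝ := fun a => (a * Real.sqrt (θ^2 - a^2) + θ^2 * arcsin (a/θ)) / 2 with hF
  have hθ' : (θ:ℝ) ≠ 0 := ne_of_gt hθ
  have hcont : ContinuousOn F (Set.Icc c θ) := by
    apply Continuous.continuousOn
    exact ((continuous_id.mul ((continuous_const.sub (continuous_pow 2)).sqrt)).add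
      (continuous_const.mul (Real.continuous_arcsin.comp (continuous_id.div_const θ)))).div_const 2
  have hderiv : ∀ a ∈ Set.Ioo c θ, HasDerivAt F (Real.sqrt (θ^2 - a^2)) a := by
    intro a ha
    have haθ : -θ < a := lt_of_lt_of_le (by linarith) ha.1.le
    have h1 : (0:ℝ) < θ^2 - a^2 := by nlinarith [ha.2, haθ]
    have hs : (0:ℝ) < Real.sqrt (θ^2 - a^2) := Real.sqrt_pos.2 h1
    have hsne : Real.sqrt (θ^2 - a^2) ≠ 0 := ne_of_gt hs
    have hs2 : Real.sqrt (θ^2 - a^2) ^ 2 = θ^2 - a^2 := Real.sq_sqrt h1.le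
    have hd1 : HasDerivAt (fun a : ℝ => θ^2 - a^2) (-(2*a)) a := by
      simpa using ((hasDerivAt_pow 2 a).const_sub (θ^2))
    have hd2 : HasDerivAt (fun a : ℝ => Real.sqrt (θ^2 - a^2))
        (-(2*a) / (2 * Real.sqrt (θ^2 - a^2))) a := hd1.sqrt (ne_of_gt h1)
    have hd3 : HasDerivAt (fun a : ℝ => a * Real.sqrt (θ^2 - a^2))
        (1 * Real.sqrt (θ^2 - a^2) + a * (-(2*a) / (2 * Real.sqrt (θ^2 - a^2)))) a :=
      (hasDerivAt_id a).mul hd2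
    have hne1 : a / θ ≠ -1 := by
      intro h
      rw [div_eq_iff hθ'] at h
      linarith [haθ]
    have hne2 : a / θ ≠ 1 := by
      intro h
      rw [div_eq_one_iff_eq hθ'] at h
      exact absurd h (ne_of_lt ha.2)
    have hd4 : HasDerivAt (fun a : ℝ => arcsin (a/θ))
        (1 / Real.sqrt (1 - (a/θ)^2) * (1/θ)) a := by
      have := (Real.hasDerivAt_arcsin hne1 hne2).comp a
        ((hasDerivAt_id a).div_const θ)
      simpa [Function.comp_def] using this
    have hsq : Real.sqrt (1 - (a/θ)^2) = Real.sqrt (θ^2 - a^2) / θ := by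
      have e : 1 - (a/θ)^2 = (θ^2 - a^2) / θ^2 := by field_simp
      rw [e, Real.sqrt_div h1.le, Real.sqrt_sq hθ.le]
    have hd4' : HasDerivAt (fun a : ℝ => arcsin (a/θ)) (1 / Real.sqrt (θ^2 - a^2)) a := by
      convert hd4 using 1
      rw [hsq, one_div_div]
      field_simp
    have := (hd3.add (hd4'.const_mul (θ^2))).div_const 2
    refine this.congr_deriv ?_
    field_simp
    ring_nf
    ring_nf at hs2
    first
    | linarith [hs2]
    | linear_combination (2 * Real.sqrt (θ^2 - a^2)) * hs2
    | nlinarith [hs2, hs]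
  have hint : IntervalIntegrable (fun a => Real.sqrt (θ^2 - a^2)) volume c θ :=
    Continuous.intervalIntegrable ((continuous_const.sub (continuous_pow 2)).sqrt) _ _
  rw [integral_eq_sub_of_hasDeriv_right_of_le hcθ hcont
    (fun a ha => (hderiv a ha).hasDerivWithinAt) hint]
  have h1 : Real.sqrt (θ^2 - θ^2) = 0 := by simp
  have h2 : θ/θ = 1 := div_self hθ'
  simp only [hF, h1, h2, Real.arcsin_one, Real.arccos]
  ring

set_option maxHeartbeats 1000000

section
open Set

lemma plane_vol (θ v : ℝ) (hθ : 0 < θ) (hv0 : 0 ≤ v) (hv2 : v ≤ 2 * θ) :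
    volume {q : ℝ × ℝ | q.1^2 + q.2^2 < θ^2 ∧ (q.1 - v)^2 + q.2^2 < θ^2}
      = ENNReal.ofReal (4 * ∫ a in (v/2)..θ, Real.sqrt (θ^2 - a^2)) := by
  set g : ℝ → ℝ := fun a => Real.sqrt (θ^2 - max (a^2) ((a-v)^2)) with hg
  have hgc : Continuous g :=
    (continuous_const.sub ((continuous_pow 2).max
      ((continuous_id.sub continuous_const).pow 2))).sqrt
  have hvθ : v - θ ≤ θ := by linarith
  have hset : {q : ℝ × ℝ | q.1^2 + q.2^2 < θ^2 ∧ (q.1 - v)^2 + q.2^2 < θ^2}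
      = regionBetween (-g) g (Ioo (v - θ) θ) := by
    ext ⟨a, b⟩
    simp only [regionBetween, mem_setOf_eq, mem_Ioo, Pi.neg_apply]
    constructor
    · rintro ⟨h1, h2⟩
      have hb2 : 0 ≤ b^2 := sq_nonneg b
      have ha1 : a^2 < θ^2 := by linarith
      have ha2 : (a - v)^2 < θ^2 := by linarith
      have haθ : a < θ := by nlinarith
      have hav : v - θ < a := by nlinarith
      have hmax : max (a^2) ((a-v)^2) < θ^2 := max_lt ha1 ha2
      have habs : |b| < g a := by
        rw [hg]
        rw [show |b| = Real.sqrt (b^2) by rw [Real.sqrt_sq_eq_abs]]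
        apply Real.sqrt_lt_sqrt (sq_nonneg b)
        rcases max_cases (a^2) ((a-v)^2) with ⟨h, _⟩ | ⟨h, _⟩ <;> rw [h] <;> linarith
      exact ⟨⟨hav, haθ⟩, abs_lt.1 habs⟩
    · rintro ⟨⟨hav, haθ⟩, hb1, hb2⟩
      have ha1 : a^2 < θ^2 := by nlinarith
      have ha2 : (a - v)^2 < θ^2 := by nlinarith
      have hmax : max (a^2) ((a-v)^2) < θ^2 := max_lt ha1 ha2
      have hpos : 0 ≤ θ^2 - max (a^2) ((a-v)^2) := by linarith
      have habs : |b| < g a := abs_lt.2 ⟨hb1, hb2⟩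
      have : b^2 < θ^2 - max (a^2) ((a-v)^2) := by
        have := Real.sq_sqrt hpos
        nlinarith [abs_nonneg b, sq_abs b, mul_self_lt_mul_self (abs_nonneg b) habs]
      constructor
      · nlinarith [le_max_left (a^2) ((a-v)^2)]
      · nlinarith [le_max_right (a^2) ((a-v)^2)]
  have hgint : IntegrableOn g (Ioo (v - θ) θ) := by
    exact (hgc.integrableOn_Icc).mono_set Ioo_subset_Icc_self
  rw [hset, Measure.volume_eq_prod, volume_regionBetween_eq_integral (hgint.neg) hgint
    measurableSet_Ioo (fun a _ => by
      simp only [Pi.neg_apply, hg]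
      exact neg_le_self (Real.sqrt_nonneg _))]
  congr 1
  have h1 : ∫ a in Ioo (v - θ) θ, (g - -g) a = ∫ a in Ioo (v - θ) θ, 2 * g a := by
    apply setIntegral_congr_fun measurableSet_Ioo
    intro a _
    simp only [Pi.sub_apply, Pi.neg_apply]
    ring
  rw [h1, ← integral_Ioc_eq_integral_Ioo, ← intervalIntegral.integral_of_le hvθ]
  have h2g : IntervalIntegrable (fun a => 2 * g a) volume (v - θ) (v/2) :=
    (continuous_const.mul hgc).intervalIntegrable _ _
  have h2g' : IntervalIntegrable (fun a => 2 * g a) volume (v/2) θ :=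
    (continuous_const.mul hgc).intervalIntegrable _ _
  rw [← intervalIntegral.integral_add_adjacent_intervals h2g h2g']
  have hI2 : ∫ a in (v/2)..θ, 2 * g a = ∫ a in (v/2)..θ, 2 * Real.sqrt (θ^2 - a^2) := by
    apply intervalIntegral.integral_congr
    intro a ha
    rw [uIcc_of_le (by linarith : v/2 ≤ θ)] at ha
    have : (a - v)^2 ≤ a^2 := by nlinarith [ha.1, ha.2]
    rw [hg]; simp only [max_eq_left this]
  have hI1 : ∫ a in (v-θ)..(v/2), 2 * g a = ∫ a in (v/2)..θ, 2 * Real.sqrt (θ^2 - a^2) := by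
    have hcong : ∫ a in (v-θ)..(v/2), 2 * g a
        = ∫ a in (v-θ)..(v/2), (fun u => 2 * Real.sqrt (θ^2 - u^2)) (v - a) := by
      apply intervalIntegral.integral_congr
      intro a ha
      rw [uIcc_of_le (by linarith : v - θ ≤ v/2)] at ha
      have h1 : a^2 ≤ (a - v)^2 := by nlinarith [ha.1, ha.2]
      have h3 : a^2 ⊔ (a - v)^2 = (v - a)^2 := by rw [max_eq_right h1]; ring
      simp only [hg, h3]
    rw [hcong, intervalIntegral.integral_comp_sub_left (fun u => 2 * Real.sqrt (θ^2 - u^2)) v,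
      show v - v/2 = v/2 by ring, show v - (v - θ) = θ by ring]
  rw [hI1, hI2, intervalIntegral.integral_const_mul]
  ring


/-- The area of the intersection of two disks of equal radius `θ` in `ℝ²` whose
centers are at distance `v`, with `0 ≤ v ≤ 2θ`, equals
`2θ² arccos(v/(2θ)) − v √(θ² − v²/4)`. -/
theorem disk_intersection_area
    (θ v : ℝ) (hθ : 0 < θ) (hv0 : 0 ≤ v) (hv2 : v ≤ 2 * θ)
    (x y : EuclideanSpace ℝ (Fin 2)) (hxy : dist x y = v) :
    (volume (Metric.closedBall x θ ∩ Metric.closedBall y θ)).toReal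
      = 2 * θ ^ 2 * Real.arccos (v / (2 * θ)) - v * Real.sqrt (θ ^ 2 - v ^ 2 / 4) := by
  have hv2' : v/2 ≤ θ := by linarith
  -- step 1: closed balls to open balls
  have step1 : volume (Metric.closedBall x θ ∩ Metric.closedBall y θ)
      = volume (Metric.ball x θ ∩ Metric.ball y θ) := by
    refine (measure_eq_measure_of_null_diff
      (Set.inter_subset_inter Metric.ball_subset_closedBall Metric.ball_subset_closedBall) ?_).symm
    apply measure_mono_null (t := Metric.sphere x θ ∪ Metric.sphere y θ)
    · rintro p ⟨⟨hp1, hp2⟩, hp3⟩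
      simp only [Set.mem_inter_iff, Metric.mem_ball, not_and_or, not_lt] at hp3
      rcases hp3 with h | h
      · exact Or.inl (le_antisymm (Metric.mem_closedBall.1 hp1) h)
      · exact Or.inr (le_antisymm (Metric.mem_closedBall.1 hp2) h)
    · exact measure_union_null (Measure.addHaar_sphere volume x θ)
        (Measure.addHaar_sphere volume y θ)
  -- step 2: translate
  set d : EuclideanSpace ℝ (Fin 2) := y - x with hd
  have hdn : ‖d‖ = v := by rw [hd, ← dist_eq_norm, dist_comm, hxy]
  have hmeas2 : MeasurableSet (Metric.ball x θ ∩ Metric.ball y θ) :=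
    (Metric.isOpen_ball.inter Metric.isOpen_ball).measurableSet
  have step2 : volume (Metric.ball x θ ∩ Metric.ball y θ)
      = volume (Metric.ball (0 : EuclideanSpace ℝ (Fin 2)) θ ∩ Metric.ball d θ) := by
    rw [← (measurePreserving_add_left volume x).measure_preimage hmeas2.nullMeasurableSet]
    congr 1
    ext p
    simp only [Set.mem_inter_iff, Set.mem_preimage, Metric.mem_ball, dist_eq_norm, hd]
    constructor
    · rintro ⟨h1, h2⟩
      exact ⟨by simpa using h1, by rw [show p - (y - x) = x + p - y by abel]; exact h2⟩
    · rintro ⟨h1, h2⟩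
      exact ⟨by simpa using h1, by rw [show x + p - y = p - (y - x) by abel]; exact h2⟩
  -- step 3: reflect
  set p₀ : EuclideanSpace ℝ (Fin 2) := EuclideanSpace.single 0 v with hp₀
  have hp₀n : ‖p₀‖ = v := by
    rw [hp₀, EuclideanSpace.norm_single, Real.norm_eq_abs, abs_of_nonneg hv0]
  set R := Submodule.reflection (ℝ ∙ (d - p₀))ᗮ with hR
  have hRd : R d = p₀ := Submodule.reflection_sub (by rw [hdn, hp₀n])
  have hR0 : R 0 = 0 := map_zero R
  have hmeas3 : MeasurableSet (Metric.ball (0 : EuclideanSpace ℝ (Fin 2)) θ ∩ Metric.ball p₀ θ) :=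
    (Metric.isOpen_ball.inter Metric.isOpen_ball).measurableSet
  have step3 : volume (Metric.ball (0 : EuclideanSpace ℝ (Fin 2)) θ ∩ Metric.ball d θ)
      = volume (Metric.ball (0 : EuclideanSpace ℝ (Fin 2)) θ ∩ Metric.ball p₀ θ) := by
    rw [← R.measurePreserving.measure_preimage hmeas3.nullMeasurableSet]
    congr 1
    rw [Set.preimage_inter]
    have e1 : R ⁻¹' Metric.ball (0 : EuclideanSpace ℝ (Fin 2)) θ
        = Metric.ball (0 : EuclideanSpace ℝ (Fin 2)) θ := by
      have h := R.isometry.preimage_ball 0 θ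
      rwa [hR0] at h
    have e2 : R ⁻¹' Metric.ball p₀ θ = Metric.ball d θ := by
      have h := R.isometry.preimage_ball d θ
      rwa [hRd] at h
    rw [e1, e2]
  -- step 4: to ℝ × ℝ
  set O : Set (ℝ × ℝ) := {q : ℝ × ℝ | q.1^2 + q.2^2 < θ^2 ∧ (q.1 - v)^2 + q.2^2 < θ^2} with hO
  have hOopen : MeasurableSet O := by
    apply IsOpen.measurableSet
    apply IsOpen.inter
    · exact isOpen_lt ((continuous_fst.pow 2).add (continuous_snd.pow 2)) continuous_const
    · exact isOpen_lt (((continuous_fst.sub continuous_const).pow 2).add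
        (continuous_snd.pow 2)) continuous_const
  have step4 : volume (Metric.ball (0 : EuclideanSpace ℝ (Fin 2)) θ ∩ Metric.ball p₀ θ)
      = volume O := by
    have hmp := (volume_preserving_finTwoArrow ℝ).comp
      (EuclideanSpace.volume_preserving_symm_measurableEquiv_toLp (Fin 2))
    rw [← hmp.measure_preimage hOopen.nullMeasurableSet]
    congr 1
    ext z
    have hz0 : (MeasurableEquiv.finTwoArrow ((MeasurableEquiv.toLp 2 (Fin 2 → ℝ)).symm z))
        = (z 0, z 1) := rfl
    simp only [Set.mem_inter_iff, Metric.mem_ball, Set.mem_preimage, Function.comp_apply, hz0,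
      hO, Set.mem_setOf_eq, dist_zero_right, dist_eq_norm, sub_zero]
    have hn1 : ‖z‖^2 = z 0 ^ 2 + z 1 ^ 2 := by
      rw [EuclideanSpace.norm_eq, Real.sq_sqrt (by positivity)]
      simp [Fin.sum_univ_two, sq_abs]
    have hc0 : p₀ 0 = v := by simp [hp₀, EuclideanSpace.single_apply]
    have hc1 : p₀ 1 = 0 := by simp [hp₀, EuclideanSpace.single_apply]
    have hn2 : ‖z - p₀‖^2 = (z 0 - v) ^ 2 + z 1 ^ 2 := by
      rw [EuclideanSpace.norm_eq, Real.sq_sqrt (by positivity)]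
      simp only [Fin.sum_univ_two, PiLp.sub_apply, Real.norm_eq_abs, sq_abs, hc0, hc1]
      ring
    constructor
    · rintro ⟨h1, h2⟩
      constructor
      · rw [← hn1]; nlinarith [norm_nonneg z]
      · rw [← hn2]; nlinarith [norm_nonneg (z - p₀)]
    · rintro ⟨h1, h2⟩
      rw [← hn1] at h1; rw [← hn2] at h2
      constructor
      · nlinarith [norm_nonneg z]
      · nlinarith [norm_nonneg (z - p₀)]
  rw [step1, step2, step3, step4, plane_vol θ v hθ hv0 hv2]
  have hint_nonneg : 0 ≤ ∫ a in (v/2)..θ, Real.sqrt (θ^2 - a^2) :=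
    intervalIntegral.integral_nonneg hv2' (fun a _ => Real.sqrt_nonneg _)
  rw [ENNReal.toReal_ofReal (by positivity), key_integral θ (v/2) hθ (by linarith) hv2']
  have e1 : v/2/θ = v/(2*θ) := by ring
  have e2 : θ^2 - (v/2)^2 = θ^2 - v^2/4 := by ring
  rw [e1, e2]
  ring

end
end

section
/- For a stationary Poisson point process Ψ on ℝ² with intensity μ and a fixed point x ∈ ℝ², the point process {‖y‖ + ‖x − y‖ : y ∈ Ψ} on the real line is a Poisson point process on [‖x‖, ∞) with intensity function λ_x(r) = (μπ/4)(2r² − ‖x‖²)/√(r² − ‖x‖²) for r > ‖x‖. -/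
open MeasureTheory Real
open scoped ENNReal NNReal

/-- `negExp t = e^{-t}` for `t : ℝ≥0∞`, with `e^{-∞} = 0`. -/
noncomputable def negExp (t : ℝ≥0∞) : ℝ≥0∞ :=
  if t = ⊤ then 0 else ENNReal.ofReal (Real.exp (-t.toReal))

/-- A random counting measure `N` on `E` is a Poisson point process with intensity measure `Λ`
iff its Laplace functional satisfies `E[exp(−∫ g dN)] = exp(−∫ (1 − e^{−g}) dΛ)` for all
measurable `g ≥ 0`. -/
def IsPoissonPP {Ω E : Type*} [MeasurableSpace Ω] [MeasurableSpace E]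
    (P : Measure Ω) (N : Ω → Measure E) (Λ : Measure E) : Prop :=
  ∀ g : E → ℝ≥0∞, Measurable g →
    ∫⁻ ω, negExp (∫⁻ y, g y ∂(N ω)) ∂P = negExp (∫⁻ y, (1 - negExp (g y)) ∂Λ)



open Set
set_option maxHeartbeats 1000000

lemma ellipse_ineq {a r p q : ℝ} (ha : 0 ≤ a) (har : a < r) :
    Real.sqrt ((p + a/2)^2 + q^2) + Real.sqrt ((p - a/2)^2 + q^2) ≤ r ↔
    (r^2 - a^2) * p^2 + r^2 * q^2 ≤ r^2 * (r^2 - a^2) / 4 := by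
  have hr : 0 < r := ha.trans_lt har
  have hra : 0 < r^2 - a^2 := by nlinarith
  set A := Real.sqrt ((p + a/2)^2 + q^2) with hA
  set B := Real.sqrt ((p - a/2)^2 + q^2) with hB
  have hA0 : 0 ≤ A := Real.sqrt_nonneg _
  have hB0 : 0 ≤ B := Real.sqrt_nonneg _
  have hA2 : A^2 = (p + a/2)^2 + q^2 := Real.sq_sqrt (by positivity)
  have hB2 : B^2 = (p - a/2)^2 + q^2 := Real.sq_sqrt (by positivity)
  have e1 : (r^2 - A^2 - B^2)^2 - 4*(A*B)^2 =
      r^2*(r^2-a^2) - 4*((r^2-a^2)*p^2 + r^2*q^2) := by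
    rw [mul_pow, hA2, hB2]; ring
  constructor
  · intro h
    have h2 : (A+B)^2 ≤ r^2 := pow_le_pow_left₀ (by positivity) h 2
    have h3 : 2*(A*B) ≤ r^2 - A^2 - B^2 := by nlinarith [h2]
    have h4 : 4*(A*B)^2 ≤ (r^2 - A^2 - B^2)^2 := by nlinarith [mul_nonneg hA0 hB0, h3]
    linarith [e1, h4]
  · intro h
    have hp2 : p^2 ≤ r^2/4 := by
      have h1 : (r^2-a^2) * p^2 ≤ (r^2-a^2) * (r^2/4) := by nlinarith [mul_nonneg (sq_nonneg q) (sq_nonneg r)]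
      exact le_of_mul_le_mul_left h1 hra
    have hq2 : q^2 ≤ (r^2-a^2)/4 := by
      have h1 : r^2 * q^2 ≤ r^2 * ((r^2-a^2)/4) := by
        nlinarith [mul_nonneg hra.le (sq_nonneg p)]
      exact le_of_mul_le_mul_left h1 (by positivity)
    have hM : 0 ≤ r^2 - A^2 - B^2 := by rw [hA2, hB2]; ring_nf; linarith [hp2, hq2]
    have h4 : (2*(A*B))^2 ≤ (r^2 - A^2 - B^2)^2 := by nlinarith [e1]
    have h3 : 2*(A*B) ≤ r^2 - A^2 - B^2 :=
      (pow_le_pow_iff_left₀ (by positivity) hM two_ne_zero).mp h4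
    have h2 : (A+B)^2 ≤ r^2 := by nlinarith [h3]
    exact (pow_le_pow_iff_left₀ (by positivity) hr.le two_ne_zero).mp h2

lemma coordIdent1 {x0 x1 a z0 z1 : ℝ} (ha : a ≠ 0) (hax : x0^2+x1^2 = a^2) :
    ((z0*x0+z1*x1)/a + a/2)^2 + ((-z0*x1+z1*x0)/a)^2 = (z0+x0/2)^2 + (z1+x1/2)^2 := by
  field_simp
  linear_combination (4*(z0^2+z1^2) - a^2) * hax

lemma coordIdent2 {x0 x1 a z0 z1 : ℝ} (ha : a ≠ 0) (hax : x0^2+x1^2 = a^2) :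
    ((z0*x0+z1*x1)/a - a/2)^2 + ((-z0*x1+z1*x0)/a)^2 = (z0-x0/2)^2 + (z1-x1/2)^2 := by
  field_simp
  linear_combination (4*(z0^2+z1^2) - a^2) * hax

lemma ellipseF_deriv {c K r : ℝ} (hc : 0 ≤ c) (hr : c < r) :
    HasDerivAt (fun t => K * (t * Real.sqrt (t^2 - c^2)))
      (K * (2*r^2 - c^2) / Real.sqrt (r^2 - c^2)) r := by
  have hpos : 0 < r^2 - c^2 := by nlinarith
  have hs : 0 < Real.sqrt (r^2 - c^2) := Real.sqrt_pos.mpr hpos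
  have hinner : HasDerivAt (fun t : ℝ => t^2 - c^2) (2*r) r := by
    simpa using ((hasDerivAt_pow 2 r).sub_const (c^2))
  have hsqrt : HasDerivAt (fun t : ℝ => Real.sqrt (t^2 - c^2))
      (2*r / (2 * Real.sqrt (r^2 - c^2))) r := hinner.sqrt hpos.ne'
  have := ((hasDerivAt_id r).mul hsqrt).const_mul K
  refine this.congr_deriv ?_
  show K * (1 * Real.sqrt (r^2 - c^2) + r * (2*r / (2 * Real.sqrt (r^2 - c^2)))) = K * (2*r^2 - c^2) / Real.sqrt (r^2 - c^2)
  symm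
  have h2 : Real.sqrt (r^2-c^2) * Real.sqrt (r^2-c^2) = r^2 - c^2 :=
    Real.mul_self_sqrt hpos.le
  field_simp
  linear_combination (-K) * h2

lemma ellipse_g_contOn {c K a b : ℝ} (hca : c < a) (hc : 0 ≤ c) :
    ContinuousOn (fun r => K * (2*r^2 - c^2) / Real.sqrt (r^2 - c^2)) (Icc a b) := by
  apply ContinuousOn.div
  · exact (continuous_const.mul ((continuous_const.mul (continuous_pow 2)).sub
      continuous_const)).continuousOn
  · exact (Real.continuous_sqrt.comp ((continuous_pow 2).sub continuous_const)).continuousOn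
  · intro t ht
    have : c < t := lt_of_lt_of_le hca ht.1
    have h : 0 < t^2 - c^2 := by nlinarith
    exact (Real.sqrt_pos.mpr h).ne'

lemma ellipse_lint1 {c K a b : ℝ} (hK : 0 ≤ K) (hc : 0 ≤ c) (hca : c < a) (hab : a ≤ b) :
    ∫⁻ r in Set.Ioc a b, ENNReal.ofReal (K * (2*r^2 - c^2) / Real.sqrt (r^2 - c^2)) =
      ENNReal.ofReal (K * (b * Real.sqrt (b^2 - c^2)) - K * (a * Real.sqrt (a^2 - c^2))) := by
  set g := fun r => K * (2*r^2 - c^2) / Real.sqrt (r^2 - c^2) with hg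
  have hcont : ContinuousOn g (Icc a b) := ellipse_g_contOn hca hc
  have hint : IntegrableOn g (Ioc a b) := (hcont.integrableOn_Icc).mono_set Ioc_subset_Icc_self
  have hnn : 0 ≤ᵐ[volume.restrict (Ioc a b)] g := by
    filter_upwards [ae_restrict_mem measurableSet_Ioc] with t ht
    have hct : c < t := hca.trans_le ht.1.le
    have : 0 < t^2 - c^2 := by nlinarith
    have : 0 ≤ 2*t^2 - c^2 := by nlinarith
    positivity
  rw [← ofReal_integral_eq_lintegral_ofReal hint hnn]
  congr 1
  rw [← intervalIntegral.integral_of_le hab]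
  have key := intervalIntegral.integral_eq_sub_of_hasDerivAt
    (f := fun t => K * (t * Real.sqrt (t^2 - c^2))) (f' := g) (a := a) (b := b)
    (fun t ht => by
      rw [Set.uIcc_of_le hab] at ht
      exact ellipseF_deriv hc (hca.trans_le ht.1))
    (((ellipse_g_contOn (K := K) (b := b) hca hc).mono
      (by rw [Set.uIcc_of_le hab])).intervalIntegrable)
  simpa using key

lemma ellipseF_mono {c K : ℝ} (hK : 0 ≤ K) (hc : 0 ≤ c) {s t : ℝ} (hs : c ≤ s) (hst : s ≤ t) :
    K * (s * Real.sqrt (s^2 - c^2)) ≤ K * (t * Real.sqrt (t^2 - c^2)) := by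
  apply mul_le_mul_of_nonneg_left _ hK
  have hs0 : 0 ≤ s := hc.trans hs
  apply mul_le_mul hst (Real.sqrt_le_sqrt (by nlinarith)) (Real.sqrt_nonneg _) (hs0.trans hst)

lemma ellipse_g_meas {c K : ℝ} :
    Measurable (fun r => ENNReal.ofReal (K * (2*r^2 - c^2) / Real.sqrt (r^2 - c^2))) := by
  apply ENNReal.measurable_ofReal.comp
  apply Measurable.div
  · fun_prop
  · exact Real.continuous_sqrt.measurable.comp (by fun_prop)

lemma ellipse_lint2 {c K b : ℝ} (hK : 0 ≤ K) (hc : 0 ≤ c) (hcb : c < b) :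
    ∫⁻ r in Set.Ioc c b, ENNReal.ofReal (K * (2*r^2 - c^2) / Real.sqrt (r^2 - c^2)) =
      ENNReal.ofReal (K * (b * Real.sqrt (b^2 - c^2))) := by
  set f := fun r => ENNReal.ofReal (K * (2*r^2 - c^2) / Real.sqrt (r^2 - c^2)) with hf
  set ν := volume.withDensity f with hν
  have hmeas : Measurable f := ellipse_g_meas
  have happ : ∀ s : Set ℝ, MeasurableSet s → ν s = ∫⁻ r in s, f r := fun s hs =>
    withDensity_apply f hs
  set aseq : ℕ → ℝ := fun n => c + (b - c)/(n+1) with haseq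
  have han : ∀ n : ℕ, c < aseq n ∧ aseq n ≤ b := by
    intro n
    constructor
    · have : 0 < (b - c)/((n:ℝ)+1) := div_pos (by linarith) (by positivity)
      simp [haseq]; linarith
    · have h1 : (b - c)/((n:ℝ)+1) ≤ (b-c)/1 := by
        apply div_le_div_of_nonneg_left (by linarith) one_pos (by norm_num)
      simp only [haseq, div_one] at h1 ⊢; linarith
  have hunion : Set.Ioc c b = ⋃ n : ℕ, Set.Ioc (aseq n) b := by
    ext t
    simp only [Set.mem_Ioc, Set.mem_iUnion]
    constructor
    · rintro ⟨hct, htb⟩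
      obtain ⟨n, hn⟩ := exists_nat_one_div_lt (show 0 < (t - c)/(b - c) by
        apply div_pos (by linarith) (by linarith))
      refine ⟨n, ?_, htb⟩
      have hbc : 0 < b - c := by linarith
      have : (b - c) * (1/((n:ℝ)+1)) < (b - c) * ((t - c)/(b-c)) :=
        mul_lt_mul_of_pos_left hn hbc
      rw [mul_div_cancel₀ _ hbc.ne'] at this
      simp only [haseq]
      rw [mul_one_div] at this
      linarith
    · rintro ⟨n, hnt, htb⟩
      exact ⟨(han n).1.trans hnt, htb⟩
  have hmono : Monotone (fun n : ℕ => Set.Ioc (aseq n) b) := by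
    intro n m hnm
    apply Set.Ioc_subset_Ioc_left
    simp only [haseq]
    have : (b - c)/((m:ℝ)+1) ≤ (b - c)/((n:ℝ)+1) := by
      apply div_le_div_of_nonneg_left (by linarith [(han 0).1, (han 0).2]) (by positivity)
        (by exact_mod_cast by omega)
    linarith
  calc ∫⁻ r in Set.Ioc c b, f r = ν (Set.Ioc c b) := (happ _ measurableSet_Ioc).symm
    _ = ν (⋃ n, Set.Ioc (aseq n) b) := by rw [hunion]
    _ = ⨆ n, ν (Set.Ioc (aseq n) b) := hmono.directed_le.measure_iUnion
    _ = ⨆ n, ENNReal.ofReal (K * (b * Real.sqrt (b^2 - c^2)) -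
          K * (aseq n * Real.sqrt ((aseq n)^2 - c^2))) := by
        congr 1; funext n
        rw [happ _ measurableSet_Ioc, ellipse_lint1 hK hc (han n).1 (han n).2]
    _ = ENNReal.ofReal (K * (b * Real.sqrt (b^2 - c^2))) := by
        have htends : Filter.Tendsto (fun n : ℕ => ENNReal.ofReal
            (K * (b * Real.sqrt (b^2 - c^2)) - K * (aseq n * Real.sqrt ((aseq n)^2 - c^2))))
            Filter.atTop (nhds (ENNReal.ofReal (K * (b * Real.sqrt (b^2 - c^2))))) := by
          have h1 : Filter.Tendsto aseq Filter.atTop (nhds c) := by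
            have : Filter.Tendsto (fun n : ℕ => (b - c)/((n:ℝ)+1)) Filter.atTop (nhds ((b-c)*0)) := by
              simpa [div_eq_mul_inv, mul_comm] using
                (tendsto_one_div_add_atTop_nhds_zero_nat.const_mul (b - c))
            rw [mul_zero] at this
            simpa using this.const_add c
          have h2 : Filter.Tendsto (fun n => K * (aseq n * Real.sqrt ((aseq n)^2 - c^2)))
              Filter.atTop (nhds (K * (c * Real.sqrt (c^2 - c^2)))) := by
            apply Filter.Tendsto.const_mul
            exact h1.mul ((Real.continuous_sqrt.tendsto _).comp
              (((h1.pow 2).sub tendsto_const_nhds)))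
          have h3 : K * (c * Real.sqrt (c^2 - c^2)) = 0 := by simp
          rw [h3] at h2
          have := (tendsto_const_nhds (x := K * (b * Real.sqrt (b^2 - c^2)))
            (f := Filter.atTop (α := ℕ))).sub h2
          rw [sub_zero] at this
          exact (ENNReal.continuous_ofReal.tendsto _).comp this
        have hmon : Monotone (fun n : ℕ => ENNReal.ofReal
            (K * (b * Real.sqrt (b^2 - c^2)) - K * (aseq n * Real.sqrt ((aseq n)^2 - c^2)))) := by
          intro n m hnm
          apply ENNReal.ofReal_le_ofReal
          have hle : aseq m ≤ aseq n := by
            simp only [haseq]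
            have : (b - c)/((m:ℝ)+1) ≤ (b - c)/((n:ℝ)+1) :=
              div_le_div_of_nonneg_left (by linarith) (by positivity) (by exact_mod_cast by omega)
            linarith
          have := ellipseF_mono hK hc (han m).1.le hle
          linarith
        exact tendsto_nhds_unique (tendsto_atTop_iSup hmon) htends

lemma enorm_eq (y : EuclideanSpace ℝ (Fin 2)) : ‖y‖ = Real.sqrt ((y 0)^2 + (y 1)^2) := by
  rw [EuclideanSpace.norm_eq]
  simp [Fin.sum_univ_two, sq_abs]

lemma vol_ellipse_gt {x : EuclideanSpace ℝ (Fin 2)} {r : ℝ} (hx : x ≠ 0) (hr : ‖x‖ < r) :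
    volume {y : EuclideanSpace ℝ (Fin 2) | ‖y‖ + ‖x - y‖ ≤ r} =
      ENNReal.ofReal (π * (r * Real.sqrt (r^2 - ‖x‖^2)) / 4) := by
  set a := ‖x‖ with hadef
  have ha : 0 < a := norm_pos_iff.mpr hx
  have hr0 : 0 < r := ha.trans hr
  have hra : 0 < r^2 - a^2 := by nlinarith
  set b' := Real.sqrt (r^2 - a^2) / 2 with hb'
  have hb'pos : 0 < b' := by positivity
  have hb2 : b'^2 = (r^2 - a^2)/4 := by
    rw [hb', div_pow, Real.sq_sqrt hra.le]; norm_num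
  set x0 := x 0 with hx0; set x1 := x 1 with hx1
  have hax : x0^2 + x1^2 = a^2 := by
    have h := enorm_eq x
    rw [← hadef, ← hx0, ← hx1] at h
    rw [← Real.sq_sqrt (show (0:ℝ) ≤ x0^2 + x1^2 by positivity), ← h]
  set M := Matrix.of ![![r/(2*a)*x0, -(b'/a)*x1], ![r/(2*a)*x1, b'/a*x0]] with hM
  set L := Matrix.toEuclideanLin M with hLdef
  have hL0 : ∀ u : EuclideanSpace ℝ (Fin 2),
      (L u) 0 = r/(2*a)*x0 * u 0 + (-(b'/a)*x1) * u 1 := by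
    intro u
    rw [hLdef, Matrix.toEuclideanLin_apply]
    simp [hM, Matrix.mulVec, dotProduct, Fin.sum_univ_two]
  have hL1 : ∀ u : EuclideanSpace ℝ (Fin 2),
      (L u) 1 = r/(2*a)*x1 * u 0 + (b'/a*x0) * u 1 := by
    intro u
    rw [hLdef, Matrix.toEuclideanLin_apply]
    simp [hM, Matrix.mulVec, dotProduct, Fin.sum_univ_two]
  have hset : {y : EuclideanSpace ℝ (Fin 2) | ‖y‖ + ‖x - y‖ ≤ r} =
      (fun z => (2:ℝ)⁻¹ • x + z) '' (L '' Metric.closedBall 0 1) := by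
    ext y
    simp only [Set.mem_setOf_eq, Set.mem_image, Metric.mem_closedBall, dist_zero_right]
    constructor
    · intro h
      set z0 := y 0 - x0/2 with hz0
      set z1 := y 1 - x1/2 with hz1
      set p := (z0*x0 + z1*x1)/a with hp
      set q := (-z0*x1 + z1*x0)/a with hq
      have hy : ‖y‖ = Real.sqrt ((p + a/2)^2 + q^2) := by
        rw [enorm_eq]
        congr 1
        rw [hp, hq, coordIdent1 ha.ne' hax, hz0, hz1]
        ring
      have hxy : ‖x - y‖ = Real.sqrt ((p - a/2)^2 + q^2) := by
        rw [enorm_eq]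
        have e0 : (x - y) 0 = x0 - y 0 := by simp [hx0]
        have e1 : (x - y) 1 = x1 - y 1 := by simp [hx1]
        rw [e0, e1]
        congr 1
        rw [hp, hq, coordIdent2 ha.ne' hax, hz0, hz1]
        ring
      rw [hy, hxy] at h
      have hineq := (ellipse_ineq ha.le hr).mp h
      set u : EuclideanSpace ℝ (Fin 2) := (WithLp.equiv 2 (Fin 2 → ℝ)).symm ![2*p/r, q/b'] with hu
      have hu0 : u 0 = 2*p/r := by rw [hu]; simp
      have hu1 : u 1 = q/b' := by rw [hu]; simp
      refine ⟨L u, ⟨u, ?_, rfl⟩, ?_⟩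
      · rw [enorm_eq, hu0, hu1]
        apply Real.sqrt_le_one.mpr
        rw [div_pow, div_pow, hb2, div_add_div _ _ (by positivity) (by positivity),
          div_le_one (by positivity)]
        nlinarith [hineq]
      · ext i
        fin_cases i
        · show ((2:ℝ)⁻¹ • x + L u) 0 = y 0
          rw [PiLp.add_apply, PiLp.smul_apply, hL0 u, hu0, hu1, smul_eq_mul, ← hx0, hp, hq,
            hz0, hz1]
          field_simp
          linear_combination (2*(y 0) - x0) * hax
        · show ((2:ℝ)⁻¹ • x + L u) 1 = y 1
          rw [PiLp.add_apply, PiLp.smul_apply, hL1 u, hu0, hu1, smul_eq_mul, ← hx1, hp, hq,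
            hz0, hz1]
          field_simp
          linear_combination (2*(y 1) - x1) * hax
    · rintro ⟨_, ⟨u, hu, rfl⟩, rfl⟩
      set u0 := u 0 with hu0; set u1 := u 1 with hu1
      have hu2 : u0^2 + u1^2 ≤ 1 := by
        have := Real.sqrt_le_one.mp (by rw [← enorm_eq u]; exact hu)
        exact this
      have hn1 : ‖(2:ℝ)⁻¹ • x + L u‖ = Real.sqrt ((r/2*u0 + a/2)^2 + (b'*u1)^2) := by
        rw [enorm_eq, PiLp.add_apply, PiLp.add_apply, PiLp.smul_apply, PiLp.smul_apply,
          hL0 u, hL1 u, smul_eq_mul, smul_eq_mul, ← hx0, ← hx1, ← hu0, ← hu1]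
        congr 1
        field_simp
        linear_combination ((r*u0 + a)^2 + 4*b'^2 * u1^2) * hax
      have hn2 : ‖x - ((2:ℝ)⁻¹ • x + L u)‖ = Real.sqrt ((r/2*u0 - a/2)^2 + (b'*u1)^2) := by
        rw [enorm_eq]
        have e0 : (x - ((2:ℝ)⁻¹ • x + L u)) 0 = x0 - (2⁻¹ * x0 + (L u) 0) := by simp [hx0]
        have e1 : (x - ((2:ℝ)⁻¹ • x + L u)) 1 = x1 - (2⁻¹ * x1 + (L u) 1) := by simp [hx1]
        rw [e0, e1, hL0 u, hL1 u, ← hu0, ← hu1]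
        congr 1
        field_simp
        linear_combination ((r*u0 - a)^2 + 4*b'^2 * u1^2) * hax
      rw [hn1, hn2]
      apply (ellipse_ineq ha.le hr).mpr
      have key : (r^2-a^2)*(r/2*u0)^2 + r^2*(b'*u1)^2 = r^2*(r^2-a^2)/4*(u0^2+u1^2) := by
        rw [mul_pow b' u1 2, hb2]; ring
      rw [key]
      calc r^2*(r^2-a^2)/4*(u0^2+u1^2) ≤ r^2*(r^2-a^2)/4 * 1 :=
            mul_le_mul_of_nonneg_left hu2 (by positivity)
        _ = r^2*(r^2-a^2)/4 := mul_one _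
  have hdet : LinearMap.det L = r * b' / 2 := by
    rw [hLdef, Matrix.toEuclideanLin_eq_toLin, LinearMap.det_toLin]
    rw [hM]
    rw [Matrix.det_fin_two]
    simp only [Matrix.of_apply, Matrix.cons_val', Matrix.cons_val_zero, Matrix.empty_val',
      Matrix.cons_val_fin_one, Matrix.cons_val_one, Matrix.head_cons, Matrix.head_fin_const]
    field_simp
    linear_combination hax
  rw [hset, Set.image_add_left, measure_preimage_add, Measure.addHaar_image_linearMap, hdet]
  have hball : volume (Metric.closedBall (0 : EuclideanSpace ℝ (Fin 2)) 1) = ENNReal.ofReal π := by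
    rw [EuclideanSpace.volume_closedBall]
    norm_num [Real.Gamma_two, Real.sq_sqrt Real.pi_pos.le]
  rw [hball, abs_of_nonneg (by positivity), ← ENNReal.ofReal_mul (by positivity)]
  congr 1
  rw [hb']
  ring

lemma vol_ellipse (x : EuclideanSpace ℝ (Fin 2)) (r : ℝ) :
    volume {y : EuclideanSpace ℝ (Fin 2) | ‖y‖ + ‖x - y‖ ≤ r} =
      ENNReal.ofReal (π * (r * Real.sqrt (r^2 - ‖x‖^2)) / 4) := by
  rcases lt_trichotomy r ‖x‖ with hlt | heq | hgt
  · have hempty : {y : EuclideanSpace ℝ (Fin 2) | ‖y‖ + ‖x - y‖ ≤ r} = ∅ := by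
      ext y
      simp only [Set.mem_setOf_eq, Set.mem_empty_iff_false, iff_false, not_le]
      calc r < ‖x‖ := hlt
        _ = ‖y + (x - y)‖ := by rw [show y + (x - y) = x by abel]
        _ ≤ ‖y‖ + ‖x - y‖ := norm_add_le _ _
    rw [hempty, measure_empty]
    symm
    rw [ENNReal.ofReal_eq_zero]
    rcases le_or_gt r 0 with hr0 | hr0
    · have h1 : 0 ≤ Real.sqrt (r^2 - ‖x‖^2) := Real.sqrt_nonneg _
      nlinarith [Real.pi_pos, mul_nonneg (neg_nonneg.mpr hr0) h1]
    · have h2 : r^2 - ‖x‖^2 < 0 := by nlinarith [norm_nonneg x]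
      rw [Real.sqrt_eq_zero_of_nonpos h2.le]
      simp
  · have hzero : volume {y : EuclideanSpace ℝ (Fin 2) | ‖y‖ + ‖x - y‖ ≤ r} = 0 := by
      apply measure_mono_null (t := (Submodule.span ℝ {x} : Submodule ℝ (EuclideanSpace ℝ (Fin 2)))) ?_ ?_
      · intro y hy
        simp only [Set.mem_setOf_eq] at hy
        have hyx : y + (x - y) = x := by abel
        have hle : ‖x‖ ≤ ‖y‖ + ‖x - y‖ := by
          calc ‖x‖ = ‖y + (x - y)‖ := by rw [hyx]
            _ ≤ ‖y‖ + ‖x - y‖ := norm_add_le _ _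
        have heq2 : ‖y + (x - y)‖ = ‖y‖ + ‖x - y‖ := by
          have h4 : ‖y‖ + ‖x - y‖ ≤ ‖x‖ := heq ▸ hy
          rw [hyx]
          linarith
        have hray : SameRay ℝ y (x - y) := by
          rw [sameRay_iff_norm_add]
          exact heq2
        obtain ⟨u, c1, c2, hc1, hc2, hsum, hy1, hy2⟩ := hray.exists_eq_smul
        have hux : u = x := by
          rw [← hyx, hy2, hy1, ← add_smul, hsum, one_smul]
        rw [hy1, hux]
        exact Submodule.smul_mem _ _ (Submodule.mem_span_singleton_self x)
      · apply Measure.addHaar_submodule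
        intro htop
        have h1 : Module.finrank ℝ (Submodule.span ℝ ({x} : Set (EuclideanSpace ℝ (Fin 2)))) ≤ 1 := by
          have := finrank_span_le_card (R := ℝ) ({x} : Set (EuclideanSpace ℝ (Fin 2)))
          simpa using this
        rw [htop] at h1
        have h2 : Module.finrank ℝ (⊤ : Submodule ℝ (EuclideanSpace ℝ (Fin 2))) = 2 := by
          rw [finrank_top]
          simp [finrank_euclideanSpace]
        omega
    rw [hzero, ← heq, show r^2 - r^2 = 0 by ring]
    simp
  · rcases eq_or_ne x 0 with rfl | hx
    · have hr0 : 0 < r := by simpa using hgt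
      have hball : {y : EuclideanSpace ℝ (Fin 2) | ‖y‖ + ‖0 - y‖ ≤ r} =
          Metric.closedBall 0 (r/2) := by
        ext y
        simp only [Set.mem_setOf_eq, zero_sub, norm_neg, Metric.mem_closedBall,
          dist_zero_right]
        constructor <;> intro h <;> linarith
      rw [hball, EuclideanSpace.volume_closedBall]
      have h1 : Real.sqrt (r^2 - ‖(0:EuclideanSpace ℝ (Fin 2))‖^2) = r := by
        simp [Real.sqrt_sq hr0.le]
      rw [h1]
      norm_num [Real.Gamma_two, Real.sq_sqrt Real.pi_pos.le]
      rw [← ENNReal.ofReal_pow (by positivity), ← ENNReal.ofReal_mul (by positivity)]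
      congr 1
      ring
    · exact vol_ellipse_gt hx hgt

lemma negExp_measurable : Measurable negExp := by
  unfold negExp
  refine Measurable.ite (measurableSet_singleton ⊤) measurable_const ?_
  exact ENNReal.measurable_ofReal.comp
    (Real.continuous_exp.measurable.comp ENNReal.measurable_toReal.neg)

lemma F0_zero {a0 t : ℝ} (ha0 : 0 ≤ a0) (ht : t ≤ a0) :
    ENNReal.ofReal (π * (t * Real.sqrt (t^2 - a0^2)) / 4) = 0 := by
  rcases le_or_gt t 0 with h | h
  · rw [ENNReal.ofReal_eq_zero]
    nlinarith [Real.pi_pos, mul_nonneg (neg_nonneg.mpr h) (Real.sqrt_nonneg (t^2 - a0^2))]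
  · have : t^2 - a0^2 ≤ 0 := by nlinarith
    rw [Real.sqrt_eq_zero_of_nonpos this]
    simp

lemma map_eq (x : EuclideanSpace ℝ (Fin 2)) (mu : ℝ≥0) :
    Measure.map (fun y => ‖y‖ + ‖x - y‖) ((mu : ℝ≥0∞) • volume) =
      ((volume.restrict (Set.Ioi ‖x‖)).withDensity fun r =>
        ENNReal.ofReal ((mu * π / 4) * (2 * r ^ 2 - ‖x‖ ^ 2) / Real.sqrt (r ^ 2 - ‖x‖ ^ 2))) := by
  set a0 := ‖x‖ with ha0def
  have ha0 : 0 ≤ a0 := norm_nonneg x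
  set f := fun y : EuclideanSpace ℝ (Fin 2) => ‖y‖ + ‖x - y‖ with hfdef
  have hfc : Continuous f := continuous_norm.add ((continuous_const.sub continuous_id).norm)
  set F0 := fun t : ℝ => π * (t * Real.sqrt (t^2 - a0^2)) / 4 with hF0
  have hmap : ∀ p q : ℝ, p ≤ q → (Measure.map f ((mu : ℝ≥0∞) • volume)) (Set.Ioc p q) =
      (mu : ℝ≥0∞) * (ENNReal.ofReal (F0 q) - ENNReal.ofReal (F0 p)) := by
    intro p q hpq
    rw [Measure.map_apply hfc.measurable measurableSet_Ioc]
    have hpre : f ⁻¹' Set.Ioc p q = {y | f y ≤ q} \ {y | f y ≤ p} := by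
      ext y
      simp only [Set.mem_preimage, Set.mem_Ioc, Set.mem_diff, Set.mem_setOf_eq, not_le]
      tauto
    have hsub : {y | f y ≤ p} ⊆ {y | f y ≤ q} := fun y hy => le_trans hy hpq
    have hclosed : ∀ t : ℝ, MeasurableSet {y : EuclideanSpace ℝ (Fin 2) | f y ≤ t} :=
      fun t => (isClosed_le hfc continuous_const).measurableSet
    rw [Measure.smul_apply, smul_eq_mul, hpre,
      measure_diff hsub (hclosed p).nullMeasurableSet
        (by rw [hfdef]; rw [vol_ellipse x p]; exact ENNReal.ofReal_ne_top)]
    rw [hfdef]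
    rw [vol_ellipse x p, vol_ellipse x q]
  have hfin : ∀ ⦃p q : ℝ⦄, p < q →
      (Measure.map f ((mu : ℝ≥0∞) • volume)) (Set.Ioc p q) ≠ ∞ := by
    intro p q hpq
    rw [hmap p q hpq.le]
    exact ENNReal.mul_ne_top ENNReal.coe_ne_top
      ((tsub_le_self.trans_lt ENNReal.ofReal_lt_top).ne)
  refine Measure.ext_of_Ioc' _ _ hfin ?_
  intro p q hpq
  rw [hmap p q hpq.le]
  rw [withDensity_apply _ measurableSet_Ioc, Measure.restrict_restrict measurableSet_Ioc,
    Set.Ioc_inter_Ioi]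
  rcases le_or_gt q a0 with hq | hq
  · rw [Set.Ioc_eq_empty (by
      simp only [not_lt]
      exact hq.trans (le_max_right p a0)), Measure.restrict_empty, lintegral_zero_measure]
    rw [F0_zero ha0 hq, zero_tsub, mul_zero]
  · have hK : (0:ℝ) ≤ (mu : ℝ) * π / 4 := by positivity
    rcases le_or_gt p a0 with hp | hp
    · rw [max_eq_right hp]
      have := ellipse_lint2 (K := (mu : ℝ) * π / 4) (b := q) hK ha0 hq
      rw [show ((mu:ℝ) * π / 4) = ((mu:ℝ≥0):ℝ) * π / 4 from rfl] at this
      rw [this]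
      rw [F0_zero ha0 hp, tsub_zero, ← ENNReal.ofReal_coe_nnreal,
        ← ENNReal.ofReal_mul mu.coe_nonneg]
      congr 1
      rw [hF0]
      ring
    · rw [max_eq_left hp.le]
      rw [ellipse_lint1 (K := (mu : ℝ) * π / 4) hK ha0 hp hpq.le]
      rw [← ENNReal.ofReal_sub _ (by
        have : 0 ≤ F0 p := by
          have h1 : (0:ℝ) < p := lt_of_le_of_lt ha0 hp
          have h2 : 0 ≤ Real.sqrt (p^2 - a0^2) := Real.sqrt_nonneg _
          rw [hF0]; positivity
        exact this), ← ENNReal.ofReal_coe_nnreal, ← ENNReal.ofReal_mul mu.coe_nonneg]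
      congr 1
      rw [hF0]
      ring

/-- For a stationary Poisson point process `Ψ` on `ℝ²` with intensity `μ` and a
fixed point `x ∈ ℝ²`, the point process `{‖y‖ + ‖x − y‖ : y ∈ Ψ}` on the real line is a
Poisson point process on `[‖x‖, ∞)` with intensity function
`λ_x(r) = (μπ/4) (2r² − ‖x‖²)/√(r² − ‖x‖²)` for `r > ‖x‖`. -/
theorem mapped_ellipse_process_is_Poisson
    {Ω : Type*} [MeasurableSpace Ω] (P : Measure Ω) [IsProbabilityMeasure P]
    (Ψ : Ω → Measure (EuclideanSpace ℝ (Fin 2))) (mu : ℝ≥0)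
    (hΨ : IsPoissonPP P Ψ ((mu : ℝ≥0∞) • volume))
    (x : EuclideanSpace ℝ (Fin 2)) :
    IsPoissonPP P (fun ω => (Ψ ω).map (fun y => ‖y‖ + ‖x - y‖))
      ((volume.restrict (Set.Ioi ‖x‖)).withDensity fun r =>
        ENNReal.ofReal ((mu * π / 4) * (2 * r ^ 2 - ‖x‖ ^ 2) / Real.sqrt (r ^ 2 - ‖x‖ ^ 2))) := by
  intro g hg
  have hfc : Continuous fun y : EuclideanSpace ℝ (Fin 2) => ‖y‖ + ‖x - y‖ :=
    continuous_norm.add ((continuous_const.sub continuous_id).norm)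
  have hf : Measurable fun y : EuclideanSpace ℝ (Fin 2) => ‖y‖ + ‖x - y‖ := hfc.measurable
  have hmeas : Measurable fun r : ℝ => 1 - negExp (g r) :=
    measurable_const.sub (negExp_measurable.comp hg)
  calc ∫⁻ ω, negExp (∫⁻ y, g y ∂((Ψ ω).map (fun y => ‖y‖ + ‖x - y‖))) ∂P
      = ∫⁻ ω, negExp (∫⁻ y, g (‖y‖ + ‖x - y‖) ∂(Ψ ω)) ∂P := by
        congr 1
        funext ω
        rw [lintegral_map hg hf]
    _ = negExp (∫⁻ y, (1 - negExp (g (‖y‖ + ‖x - y‖))) ∂((mu : ℝ≥0∞) • volume)) :=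
        hΨ _ (hg.comp hf)
    _ = negExp (∫⁻ r, (1 - negExp (g r)) ∂((volume.restrict (Set.Ioi ‖x‖)).withDensity fun r =>
          ENNReal.ofReal ((mu * π / 4) * (2 * r ^ 2 - ‖x‖ ^ 2) / Real.sqrt (r ^ 2 - ‖x‖ ^ 2)))) := by
        rw [← map_eq x mu, lintegral_map hmeas hf]
end

section
/- The integral identity ∫_c^∞ (2r² − c²)/√(r² − c²) · e^{−r/θ} dr = c²·(2θ K₁(c/θ)/c + K₀(c/θ)) holds for all c, θ > 0, where K₀ and K₁ are modified Bessel functions of the second kind. -/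
open MeasureTheory Real

/-- Modified Bessel function of the second kind `K₀`, via its integral representation
`K₀(z) = ∫₁^∞ e^{−zt}/√(t²−1) dt`. -/
noncomputable def besselK0 (z : ℝ) : ℝ :=
  ∫ t in Set.Ioi (1 : ℝ), Real.exp (-z * t) / Real.sqrt (t ^ 2 - 1)

/-- Modified Bessel function of the second kind `K₁`, via `∫₁^∞ √(t²−1) e^{−zt} dt = K₁(z)/z`. -/
noncomputable def besselK1 (z : ℝ) : ℝ :=
  z * ∫ t in Set.Ioi (1 : ℝ), Real.sqrt (t ^ 2 - 1) * Real.exp (-z * t)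

lemma integrable_g1 {z : ℝ} (hz : 0 < z) :
    IntegrableOn (fun t : ℝ => Real.sqrt (t ^ 2 - 1) * Real.exp (-z * t)) (Set.Ioi 1) := by
  have hbase : IntegrableOn (fun x : ℝ => x ^ (1 : ℝ) * Real.exp (-z * x ^ (1 : ℝ)))
      (Set.Ioi 0) := integrableOn_rpow_mul_exp_neg_mul_rpow (by norm_num) zero_lt_one hz
  have hbase' : IntegrableOn (fun x : ℝ => x ^ (1 : ℝ) * Real.exp (-z * x ^ (1 : ℝ)))
      (Set.Ioi 1) := hbase.mono_set (Set.Ioi_subset_Ioi zero_le_one)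
  apply hbase'.integrable.mono'
  · exact (Continuous.mul (by continuity) (by continuity)).aestronglyMeasurable
  · filter_upwards [ae_restrict_mem measurableSet_Ioi] with t ht
    have ht1 : (1 : ℝ) < t := ht
    have ht0 : (0 : ℝ) < t := lt_trans one_pos ht1
    rw [Real.rpow_one]
    rw [Real.norm_eq_abs, abs_of_nonneg (by positivity)]
    have hs : Real.sqrt (t ^ 2 - 1) ≤ t := by
      calc Real.sqrt (t ^ 2 - 1) ≤ Real.sqrt (t ^ 2) := Real.sqrt_le_sqrt (by linarith)
      _ = t := by rw [Real.sqrt_sq ht0.le]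
    exact mul_le_mul_of_nonneg_right hs (Real.exp_nonneg _)

lemma integrable_g0 {z : ℝ} (hz : 0 < z) :
    IntegrableOn (fun t : ℝ => Real.exp (-z * t) / Real.sqrt (t ^ 2 - 1)) (Set.Ioi 1) := by
  have hmeas : ∀ s : Set ℝ, MeasurableSet s → AEStronglyMeasurable
      (fun t : ℝ => Real.exp (-z * t) / Real.sqrt (t ^ 2 - 1)) (volume.restrict s) := by
    intro s hs
    exact (((measurable_id.const_mul (-z)).exp).div
      (((measurable_id.pow_const 2).sub_const 1).sqrt)).aestronglyMeasurable
  have h12 : IntegrableOn (fun t : ℝ => Real.exp (-z * t) / Real.sqrt (t ^ 2 - 1))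
      (Set.Ioc 1 2) := by
    have hbase : IntervalIntegrable (fun x : ℝ => x ^ (-(1/2) : ℝ)) volume 0 1 :=
      intervalIntegral.intervalIntegrable_rpow' (by norm_num)
    have hbase2 : IntervalIntegrable (fun x : ℝ => (x - 1) ^ (-(1/2) : ℝ)) volume 1 2 := by
      have h := hbase.comp_sub_right 1
      norm_num at h
      exact h
    have hbase3 : IntegrableOn (fun x : ℝ => (x - 1) ^ (-(1/2) : ℝ)) (Set.Ioc 1 2) := by
      rw [intervalIntegrable_iff, Set.uIoc_of_le (by norm_num : (1:ℝ) ≤ 2)] at hbase2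
      exact hbase2
    apply hbase3.integrable.mono' (hmeas _ measurableSet_Ioc)
    filter_upwards [ae_restrict_mem measurableSet_Ioc] with t ht
    have ht1 : (1 : ℝ) < t := ht.1
    have hpos : (0 : ℝ) < t ^ 2 - 1 := by nlinarith
    have hsq : Real.sqrt (t - 1) ≤ Real.sqrt (t ^ 2 - 1) :=
      Real.sqrt_le_sqrt (by nlinarith)
    have hsq0 : (0 : ℝ) < Real.sqrt (t - 1) := Real.sqrt_pos.mpr (by linarith)
    rw [Real.norm_eq_abs, abs_of_nonneg (by positivity)]
    have he : Real.exp (-z * t) ≤ 1 := Real.exp_le_one_iff.mpr (by nlinarith)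
    calc Real.exp (-z * t) / Real.sqrt (t ^ 2 - 1)
        ≤ 1 / Real.sqrt (t - 1) := by
          apply div_le_div₀ (by norm_num) he (by positivity) hsq
      _ = (t - 1) ^ (-(1/2) : ℝ) := by
          rw [Real.rpow_neg (by linarith), one_div, Real.sqrt_eq_rpow]
  have h2 : IntegrableOn (fun t : ℝ => Real.exp (-z * t) / Real.sqrt (t ^ 2 - 1))
      (Set.Ioi 2) := by
    have hbase : IntegrableOn (fun x : ℝ => (Real.sqrt 3)⁻¹ * Real.exp (-z * x))
        (Set.Ioi 2) := (exp_neg_integrableOn_Ioi 2 hz).const_mul _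
    apply hbase.integrable.mono' (hmeas _ measurableSet_Ioi)
    filter_upwards [ae_restrict_mem measurableSet_Ioi] with t ht
    have ht2 : (2 : ℝ) < t := ht
    have hsq : Real.sqrt 3 ≤ Real.sqrt (t ^ 2 - 1) := Real.sqrt_le_sqrt (by nlinarith)
    have h3 : (0 : ℝ) < Real.sqrt 3 := Real.sqrt_pos.mpr (by norm_num)
    rw [Real.norm_eq_abs, abs_of_nonneg (by positivity)]
    calc Real.exp (-z * t) / Real.sqrt (t ^ 2 - 1)
        ≤ Real.exp (-z * t) / Real.sqrt 3 := by gcongr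
      _ = (Real.sqrt 3)⁻¹ * Real.exp (-z * t) := by ring
  have : Set.Ioi (1:ℝ) = Set.Ioc 1 2 ∪ Set.Ioi 2 := (Set.Ioc_union_Ioi_eq_Ioi (by norm_num)).symm
  rw [this]
  exact h12.union h2

/-- For all `c, θ > 0`,
`∫_c^∞ (2r² − c²)/√(r² − c²) · e^{−r/θ} dr = c² (2θ K₁(c/θ)/c + K₀(c/θ))`. -/
theorem ellipse_intensity_integral_bessel (c θ : ℝ) (hc : 0 < c) (hθ : 0 < θ) :
    ∫ r in Set.Ioi c, (2 * r ^ 2 - c ^ 2) / Real.sqrt (r ^ 2 - c ^ 2) * Real.exp (-r / θ)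
      = c ^ 2 * (2 * θ * besselK1 (c / θ) / c + besselK0 (c / θ)) := by
  set z : ℝ := c / θ with hzdef
  have hz : 0 < z := div_pos hc hθ
  clear_value z
  have hcomp := integral_comp_mul_left_Ioi
    (fun r => (2 * r ^ 2 - c ^ 2) / Real.sqrt (r ^ 2 - c ^ 2) * Real.exp (-r / θ)) 1 hc
  rw [mul_one] at hcomp
  have hLHS : ∫ r in Set.Ioi c,
      (2 * r ^ 2 - c ^ 2) / Real.sqrt (r ^ 2 - c ^ 2) * Real.exp (-r / θ)
      = c * ∫ t in Set.Ioi (1:ℝ),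
        (2 * (c*t) ^ 2 - c ^ 2) / Real.sqrt ((c*t) ^ 2 - c ^ 2) * Real.exp (-(c*t) / θ) := by
    rw [hcomp, smul_eq_mul, ← mul_assoc, mul_inv_cancel₀ hc.ne', one_mul]
  rw [hLHS]
  have hcongr : ∫ t in Set.Ioi (1:ℝ),
      (2 * (c*t) ^ 2 - c ^ 2) / Real.sqrt ((c*t) ^ 2 - c ^ 2) * Real.exp (-(c*t) / θ)
      = ∫ t in Set.Ioi (1:ℝ),
        c * (2 * (Real.sqrt (t ^ 2 - 1) * Real.exp (-z * t))
          + Real.exp (-z * t) / Real.sqrt (t ^ 2 - 1)) := by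
    apply setIntegral_congr_fun measurableSet_Ioi
    intro t ht
    dsimp only
    have ht1 : (1 : ℝ) < t := ht
    have hpos : (0 : ℝ) < t ^ 2 - 1 := by nlinarith
    have hsqrt : Real.sqrt ((c*t) ^ 2 - c ^ 2) = c * Real.sqrt (t ^ 2 - 1) := by
      rw [show (c*t) ^ 2 - c ^ 2 = c ^ 2 * (t ^ 2 - 1) by ring,
        Real.sqrt_mul (sq_nonneg c), Real.sqrt_sq hc.le]
    have hexp : Real.exp (-(c*t) / θ) = Real.exp (-z * t) := by
      congr 1; rw [hzdef]; field_simp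
    set s := Real.sqrt (t ^ 2 - 1) with hs
    have hs0 : 0 < s := Real.sqrt_pos.mpr hpos
    have hs2 : s ^ 2 = t ^ 2 - 1 := Real.sq_sqrt hpos.le
    rw [hsqrt, hexp]
    field_simp
    ring_nf
    linear_combination (-2) * hs2
  rw [hcongr, integral_const_mul,
    integral_add ((integrable_g1 hz).const_mul 2) (integrable_g0 hz),
    integral_const_mul]
  rw [besselK0, besselK1]
  set A := ∫ t in Set.Ioi (1:ℝ), Real.sqrt (t ^ 2 - 1) * Real.exp (-z * t) with hA
  have h2 : 2 * θ * (z * A) / c = 2 * A := by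
    rw [hzdef]; field_simp
  rw [h2]; ring
end
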